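/- arXiv:2201.08963 — 3 statements merged into one kernel-verified Lean document; each statement's English description precedes it below -/
import Mathlib

section
/- A causal-net G is a causal-Tree if and only if there is a finite (possibly empty) sequence of simple contractions λᵢ : G_{i-1} → Gᵢ (1 ≤ i ≤ n) with G₀ = G and Gₙ a point, such that for each i the set of edges of G mapped by the composite λ_{i-1} ∘ ⋯ ∘ λ₁ onto edges of the multi-edge contracted by λᵢ is itself a multi-edge of G. -/
open CategoryTheory

namespace CausalNets

/-- Acyclicity condition for raw directed-multigraph data: every directed cycle
has length zero. -/
def NoCycleData (V E : Type) (s t : E → V) : Prop :=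
  letI : Quiver V := ⟨fun a b => { e : E // s e = a ∧ t e = b }⟩
  ∀ (v : V) (p : Quiver.Path v v), p.length = 0

/-- A causal-net: a finite acyclic directed multigraph (isolated vertices and
parallel edges allowed). -/
structure CausalNet where
  V : Type
  E : Type
  src : E → V
  tgt : E → V
  fintypeV : Fintype V
  fintypeE : Fintype E
  acyclic : NoCycleData V E src tgt

attribute [instance] CausalNet.fintypeV CausalNet.fintypeE

instance CausalNet.quiver (G : CausalNet) : Quiver G.V :=
  ⟨fun a b => { e : G.E // G.src e = a ∧ G.tgt e = b }⟩

/-- The category `Cau` of causal-nets: a morphism `G ⟶ H` is a functor between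
the path categories `Paths G.V ⥤ Paths H.V`. -/
instance : Category CausalNet where
  Hom G H := Paths G.V ⥤ Paths H.V
  id G := 𝟭 (Paths G.V)
  comp φ ψ := φ ⋙ ψ

variable {G H K : CausalNet}

/-- The action of a morphism of causal-nets on vertices (objects). -/
def vmap (φ : G ⟶ H) : G.V → H.V := (φ : Paths G.V ⥤ Paths H.V).obj

/-- The action of a morphism of causal-nets on directed paths (morphisms). -/
def pmap (φ : G ⟶ H) {a b : G.V} (p : Quiver.Path a b) :
    Quiver.Path (vmap φ a) (vmap φ b) :=
  (φ : Paths G.V ⥤ Paths H.V).map p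

/-- The quiver arrow corresponding to an edge. -/
def edgeHom (G : CausalNet) (e : G.E) : G.src e ⟶ G.tgt e := ⟨e, rfl, rfl⟩

/-- The directed path which is the image of the edge `e` under the morphism `φ`. -/
def edgePath (φ : G ⟶ H) (e : G.E) :
    Quiver.Path (vmap φ (G.src e)) (vmap φ (G.tgt e)) :=
  pmap φ (Quiver.Hom.toPath (edgeHom G e))

/-- The underlying edge of a quiver arrow. -/
def homEdge {a b : G.V} (f : a ⟶ b) : G.E := Subtype.val f

/-- The list of edges traversed by a directed path. -/
def pathEdges : {a b : G.V} → Quiver.Path a b → List G.E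
  | _, _, Quiver.Path.nil => []
  | _, _, Quiver.Path.cons p f => pathEdges p ++ [homEdge f]

/-- The list of vertices visited by a directed path (including endpoints). -/
def pathVertices : {a b : G.V} → Quiver.Path a b → List G.V
  | a, _, Quiver.Path.nil => [a]
  | _, b, Quiver.Path.cons p _ => pathVertices p ++ [b]

/-- An edge `e` is a contraction of `φ` if `φ(e)` has length `0`. -/
def IsContractionEdge (φ : G ⟶ H) (e : G.E) : Prop := (edgePath φ e).length = 0

/-- An edge `e` is a segment of `φ` if `φ(e)` has length `1`. -/
def IsSegmentEdge (φ : G ⟶ H) (e : G.E) : Prop := (edgePath φ e).length = 1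

/-- An edge `e` is a subdivision of `φ` if `φ(e)` has length at least `2`. -/
def IsSubdivisionEdge (φ : G ⟶ H) (e : G.E) : Prop := 2 ≤ (edgePath φ e).length

/-- `φ` maps the edge `e` to the length-one path consisting of the edge `h`. -/
def MapsToEdge (φ : G ⟶ H) (e : G.E) (h : H.E) : Prop :=
  pathEdges (edgePath φ e) = [h]

/-- A quotient: a morphism with no null-vertex and no null-edge. -/
def IsQuotientMor (φ : G ⟶ H) : Prop :=
  (∀ v : H.V, ∃ w : G.V, vmap φ w = v) ∧ ∀ h : H.E, ∃ e : G.E, MapsToEdge φ e h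

/-- A coarse-graining: a quotient with no subdivision. -/
def IsCoarseGraining (φ : G ⟶ H) : Prop :=
  IsQuotientMor φ ∧ ∀ e : G.E, ¬ IsSubdivisionEdge φ e

/-- A vertex-coarse-graining: a coarse-graining with no multiple-edge. -/
def IsVertexCoarseGraining (φ : G ⟶ H) : Prop :=
  IsCoarseGraining φ ∧
  ∀ (h : H.E) (e₁ e₂ : G.E), MapsToEdge φ e₁ h → MapsToEdge φ e₂ h → e₁ = e₂

/-- An edge-coarse-graining: a coarse-graining with no multiple-vertex and no
contraction. -/
def IsEdgeCoarseGraining (φ : G ⟶ H) : Prop :=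
  IsCoarseGraining φ ∧ Function.Injective (vmap φ) ∧ ∀ e : G.E, ¬ IsContractionEdge φ e

/-- A merging: a vertex-coarse-graining with no contraction. -/
def IsMerging (φ : G ⟶ H) : Prop :=
  IsVertexCoarseGraining φ ∧ ∀ e : G.E, ¬ IsContractionEdge φ e

/-- A fusion: a coarse-graining with no contraction. -/
def IsFusion (φ : G ⟶ H) : Prop :=
  IsCoarseGraining φ ∧ ∀ e : G.E, ¬ IsContractionEdge φ e

/-- An inclusion: a morphism injective on vertices and on directed paths
(an injective-on-objects faithful functor). -/
def IsInclusion (φ : G ⟶ H) : Prop :=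
  Function.Injective (vmap φ) ∧
  ∀ (a b : G.V) (p q : Quiver.Path a b), pmap φ p = pmap φ q → p = q

/-- An embedding: an inclusion with no subdivision. -/
def IsEmbedding (φ : G ⟶ H) : Prop :=
  IsInclusion φ ∧ ∀ e : G.E, ¬ IsSubdivisionEdge φ e

/-- An immersion: an inclusion such that images of distinct subdivision edges
share no edge. -/
def IsImmersion (φ : G ⟶ H) : Prop :=
  IsInclusion φ ∧
  ∀ e₁ e₂ : G.E, e₁ ≠ e₂ → IsSubdivisionEdge φ e₁ → IsSubdivisionEdge φ e₂ →
    ∀ h : H.E, h ∈ pathEdges (edgePath φ e₁) → h ∉ pathEdges (edgePath φ e₂)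

/-- The internal vertices of a directed path (all visited vertices except the
two endpoints). -/
def internalVertices {a b : G.V} (p : Quiver.Path a b) : List G.V :=
  ((pathVertices p).dropLast).tail

/-- A strong morphism: all internal vertices of images of subdivision edges are
null-vertices. -/
def IsStrong (φ : G ⟶ H) : Prop :=
  ∀ e : G.E, IsSubdivisionEdge φ e →
    ∀ v ∈ internalVertices (edgePath φ e), ∀ w : G.V, vmap φ w ≠ v

/-- A vertex-disjoint morphism: images of distinct subdivision edges share no
internal vertex. -/
def IsVertexDisjoint (φ : G ⟶ H) : Prop :=
  ∀ e₁ e₂ : G.E, e₁ ≠ e₂ → IsSubdivisionEdge φ e₁ → IsSubdivisionEdge φ e₂ →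
    ∀ v : H.V, v ∈ internalVertices (edgePath φ e₁) → v ∉ internalVertices (edgePath φ e₂)

/-- A topological embedding: a strong vertex-disjoint inclusion. -/
def IsTopologicalEmbedding (φ : G ⟶ H) : Prop :=
  IsInclusion φ ∧ IsStrong φ ∧ IsVertexDisjoint φ

/-- The edge `e` covers the vertex `v` if `v` occurs on the path `φ(e)`. -/
def Covers (φ : G ⟶ H) (e : G.E) (v : H.V) : Prop :=
  v ∈ pathVertices (edgePath φ e)

/-- An isolated vertex: a vertex incident to no edge. -/
def IsolatedVertex (G : CausalNet) (v : G.V) : Prop :=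
  ∀ e : G.E, G.src e ≠ v ∧ G.tgt e ≠ v

/-- A subdivision morphism: a topological embedding such that every non-isolated
vertex of the codomain is covered and every isolated vertex of the codomain is a
simple-vertex. -/
def IsSubdivisionMor (φ : G ⟶ H) : Prop :=
  IsTopologicalEmbedding φ ∧
  (∀ v : H.V, ¬ IsolatedVertex H v → ∃ e : G.E, Covers φ e v) ∧
  (∀ v : H.V, IsolatedVertex H v → ∃! w : G.V, vmap φ w = v)

theorem mapPath_length {V W : Type} [Quiver V] [Quiver W] (F : V ⥤q W) :
    ∀ {a b : V} (p : Quiver.Path a b), (F.mapPath p).length = p.length := by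
  intro a b p
  induction p with
  | nil => rfl
  | cons q f ih =>
      show ((F.mapPath q).cons (F.map f)).length = (q.cons f).length
      rw [Quiver.Path.length_cons, Quiver.Path.length_cons, ih]

theorem noCycleData_of_map {V₁ E₁ : Type} (s₁ t₁ : E₁ → V₁) (G : CausalNet)
    (f : V₁ → G.V) (g : E₁ → G.E)
    (hs : ∀ e, G.src (g e) = f (s₁ e)) (ht : ∀ e, G.tgt (g e) = f (t₁ e)) :
    NoCycleData V₁ E₁ s₁ t₁ := by
  letI : Quiver V₁ := ⟨fun a b => { e : E₁ // s₁ e = a ∧ t₁ e = b }⟩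
  intro v p
  let F : V₁ ⥤q G.V :=
    { obj := f
      map := fun {a b} e =>
        ⟨g (Subtype.val e), by rw [hs, (Subtype.prop e).1], by rw [ht, (Subtype.prop e).2]⟩ }
  have h := G.acyclic (f v) (F.mapPath p)
  rw [mapPath_length] at h
  exact h

theorem noCycleData_of_lt {V E : Type} [Preorder V] (s t : E → V)
    (hlt : ∀ e, s e < t e) : NoCycleData V E s t := by
  letI : Quiver V := ⟨fun a b => { e : E // s e = a ∧ t e = b }⟩
  have key : ∀ {a b : V} (p : Quiver.Path a b), (a = b ∧ p.length = 0) ∨ a < b := by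
    intro a b p
    induction p with
    | nil => exact Or.inl ⟨rfl, rfl⟩
    | cons q f ih =>
        have hcb := hlt (Subtype.val f)
        rw [(Subtype.prop f).1, (Subtype.prop f).2] at hcb
        rcases ih with ⟨h, _⟩ | h
        · exact Or.inr (by rw [h]; exact hcb)
        · exact Or.inr (lt_trans h hcb)
  intro v p
  rcases key p with ⟨_, h⟩ | h
  · exact h
  · exact absurd h (lt_irrefl v)

/-- The sub-causal-net spanned by a set of vertices and a set of edges. -/
noncomputable def mkSub (G : CausalNet) (Vs : Set G.V) (Es : Set G.E)
    (hs : ∀ e ∈ Es, G.src e ∈ Vs) (ht : ∀ e ∈ Es, G.tgt e ∈ Vs) : CausalNet where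
  V := Vs
  E := Es
  src e := ⟨G.src e.1, hs e.1 e.2⟩
  tgt e := ⟨G.tgt e.1, ht e.1 e.2⟩
  fintypeV := Fintype.ofFinite _
  fintypeE := Fintype.ofFinite _
  acyclic := noCycleData_of_map _ _ G Subtype.val Subtype.val (fun _ => rfl) (fun _ => rfl)

/-- The fiber of a morphism at a vertex `v` of the codomain: the sub-causal-net
of the domain on the vertices mapped to `v` and the edges mapped to the identity
path at `v`. -/
noncomputable def fiber (φ : G ⟶ H) (v : H.V) : CausalNet :=
  mkSub G {w : G.V | vmap φ w = v}
    {e : G.E | IsContractionEdge φ e ∧ vmap φ (G.src e) = v}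
    (fun _ he => he.2)
    (fun e he =>
      show vmap φ (G.tgt e) = v from
        Quiver.Path.eq_of_length_zero (edgePath φ e) he.1 ▸ he.2)

/-- The underlying undirected (simple) graph of a causal-net. -/
def undirected (G : CausalNet) : SimpleGraph G.V where
  Adj v w := v ≠ w ∧ ∃ e : G.E, (G.src e = v ∧ G.tgt e = w) ∨ (G.src e = w ∧ G.tgt e = v)
  symm := by
    constructor
    rintro v w ⟨hne, e, he⟩
    exact ⟨hne.symm, e, he.symm⟩
  loopless := by
    constructor
    intro v h
    exact h.1 rfl

/-- A causal-net is connected if its underlying undirected graph is connected. -/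
def Connected (G : CausalNet) : Prop := (undirected G).Connected

/-- A causal-Tree: a causal-net whose simplification has a tree as underlying
undirected graph.  (Since a causal-net is acyclic, the underlying undirected
graph of its simplification is exactly `undirected G`.) -/
def IsCausalTree (G : CausalNet) : Prop := (undirected G).IsTree

/-- A contraction: a vertex-coarse-graining all of whose fibers are connected. -/
def IsContractionMor (φ : G ⟶ H) : Prop :=
  IsVertexCoarseGraining φ ∧ ∀ v : H.V, Connected (fiber φ v)

/-- A simple contraction: a contraction with exactly one non-trivial fiber, that
fiber consisting of two vertices together with all edges from the first to the
second. -/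
def IsSimpleContraction (φ : G ⟶ H) : Prop :=
  IsContractionMor φ ∧
  ∃ w₁ w₂ : G.V, w₁ ≠ w₂ ∧ vmap φ w₁ = vmap φ w₂ ∧
    (∃ e : G.E, G.src e = w₁ ∧ G.tgt e = w₂) ∧
    (∀ e : G.E, IsContractionEdge φ e ↔ (G.src e = w₁ ∧ G.tgt e = w₂)) ∧
    (∀ u u' : G.V, vmap φ u = vmap φ u' →
      u = u' ∨ ((u = w₁ ∨ u = w₂) ∧ (u' = w₁ ∨ u' = w₂)))

/-- A tree-contraction: a contraction all of whose fibers are causal-Trees. -/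
def IsTreeContraction (φ : G ⟶ H) : Prop :=
  IsContractionMor φ ∧ ∀ v : H.V, IsCausalTree (fiber φ v)

/-- A directed multi-path: a causal-net whose simplification is a directed path. -/
def IsDirectedMultiPath (K : CausalNet) : Prop :=
  ∃ (a b : K.V) (p : Quiver.Path a b),
    (pathVertices p).Nodup ∧ (∀ v : K.V, v ∈ pathVertices p) ∧
    ∀ e : K.E, ∃ h ∈ pathEdges p, K.src e = K.src h ∧ K.tgt e = K.tgt h

/-- A path-contraction: a vertex-coarse-graining all of whose fibers are
directed multi-paths. -/
def IsPathContraction (φ : G ⟶ H) : Prop :=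
  IsVertexCoarseGraining φ ∧ ∀ v : H.V, IsDirectedMultiPath (fiber φ v)

/-- A point: a causal-net with exactly one vertex and no edges. -/
def IsPoint (A : CausalNet) : Prop := (∃ v : A.V, ∀ w : A.V, w = v) ∧ IsEmpty A.E

/-- Reachability: there is a directed path from `a` to `b`. -/
def Reaches (G : CausalNet) (a b : G.V) : Prop := Nonempty (Quiver.Path a b)

/-- A coclique: a set of vertices no two distinct members of which are
comparable under the reachability order. -/
def IsCoclique (G : CausalNet) (S : Set G.V) : Prop :=
  ∀ a ∈ S, ∀ b ∈ S, a ≠ b → ¬ Reaches G a b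

/-- A multi-edge: the nonempty set of all edges from one fixed vertex to another. -/
def IsMultiEdge (G : CausalNet) (s : Set G.E) : Prop :=
  s.Nonempty ∧ ∃ a b : G.V, s = {e : G.E | G.src e = a ∧ G.tgt e = b}

/-- The pair of vertices whose multi-edge is contracted by a simple contraction. -/
def ContractedPair (φ : G ⟶ H) (w₁ w₂ : G.V) : Prop :=
  w₁ ≠ w₂ ∧ vmap φ w₁ = vmap φ w₂ ∧ (∃ e : G.E, G.src e = w₁ ∧ G.tgt e = w₂) ∧
  ∀ e : G.E, IsContractionEdge φ e ↔ (G.src e = w₁ ∧ G.tgt e = w₂)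

/-- Two causal-nets are isomorphic in `Cau`. -/
def IsIsomorphicTo (A B : CausalNet) : Prop := ∃ φ : A ⟶ B, IsIso φ

/-- A simple causal-net: at most one edge between any ordered pair of vertices. -/
def IsSimpleNet (G : CausalNet) : Prop :=
  ∀ e₁ e₂ : G.E, G.src e₁ = G.src e₂ → G.tgt e₁ = G.tgt e₂ → e₁ = e₂

/-- A harmonic causal-net: every fusion out of it is an isomorphism. -/
def Harmonic (G : CausalNet) : Prop :=
  ∀ (H : CausalNet) (φ : G ⟶ H), IsFusion φ → IsIso φ

/-- A hamiltonian path: a directed path visiting every vertex exactly once. -/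
def HasHamiltonianPath (G : CausalNet) : Prop :=
  ∃ (a b : G.V) (p : Quiver.Path a b),
    (pathVertices p).Nodup ∧ ∀ v : G.V, v ∈ pathVertices p

/-- Morphisms which can be written as a composition of finitely many morphisms
each satisfying `P`. -/
inductive IsCompOf (P : ∀ ⦃A B : CausalNet⦄, (A ⟶ B) → Prop) :
    ∀ {A B : CausalNet}, (A ⟶ B) → Prop
  | of {A B : CausalNet} (φ : A ⟶ B) : P φ → IsCompOf P φ
  | comp {A B C : CausalNet} (φ : A ⟶ B) (ψ : B ⟶ C) :
      IsCompOf P φ → IsCompOf P ψ → IsCompOf P (φ ≫ ψ)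

inductive PrimContrSeq (G : CausalNet) : ∀ {K : CausalNet}, (G ⟶ K) → Prop
  | refl : PrimContrSeq G (𝟙 G)
  | step {K L : CausalNet} (μ : G ⟶ K) (φ : K ⟶ L) :
      PrimContrSeq G μ → IsSimpleContraction φ →
      (∀ w₁ w₂ : K.V, ContractedPair φ w₁ w₂ →
        IsMultiEdge G {e : G.E | ∃ h : K.E, K.src h = w₁ ∧ K.tgt h = w₂ ∧ MapsToEdge μ e h}) →
      PrimContrSeq G (μ ≫ φ)

/-! ### Auxiliary path lemmas -/

section PathAux

variable {G H K : CausalNet}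

@[simp] theorem aux_pathEdges_nil {a : G.V} :
    pathEdges (Quiver.Path.nil : Quiver.Path a a) = [] := by rw [pathEdges]

@[simp] theorem aux_pathEdges_cons {a b c : G.V} (p : Quiver.Path a b) (f : b ⟶ c) :
    pathEdges (p.cons f) = pathEdges p ++ [homEdge f] := by rw [pathEdges]

theorem aux_singleton_append {α : Type*} (l : List α) (x y : α) (h : l ++ [x] = [y]) :
    l = [] ∧ x = y := by
  cases l with
  | nil => simpa using h
  | cons a t => 
    have := congrArg List.length h
    simp at this

theorem aux_pathEdges_comp {a b c : G.V} (p : Quiver.Path a b) (q : Quiver.Path b c) :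
    pathEdges (p.comp q) = pathEdges p ++ pathEdges q := by
  induction q with
  | nil => simp [pathEdges]
  | cons q f ih => simp [Quiver.Path.comp_cons, pathEdges, ih]

theorem aux_length_pathEdges {a b : G.V} (p : Quiver.Path a b) :
    (pathEdges p).length = p.length := by
  induction p with
  | nil => simp
  | cons p f ih => simp [ih]

theorem aux_path_single {a b : G.V} (p : Quiver.Path a b) (h : G.E)
    (hp : pathEdges p = [h]) : a = G.src h ∧ b = G.tgt h := by
  cases p with
  | nil => simp [pathEdges] at hp
  | cons q f =>
    have hq : pathEdges q = [] ∧ homEdge f = h :=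
      aux_singleton_append _ _ _ (by simpa using hp)
    have hq0 : q.length = 0 := by
      rw [← aux_length_pathEdges, hq.1]; rfl
    have := Quiver.Path.eq_of_length_zero q hq0
    subst this
    obtain ⟨e, he1, he2⟩ := f
    obtain rfl : e = h := hq.2
    exact ⟨he1.symm, he2.symm⟩

theorem aux_no_loop (e : G.E) : G.src e ≠ G.tgt e := by
  intro h
  have hp := G.acyclic (G.src e)
    ((Quiver.Path.nil.cons ⟨e, rfl, h.symm⟩ : Quiver.Path (G.src e) (G.src e)))
  simp at hp

theorem aux_no_two_cycle (e e' : G.E) (h1 : G.tgt e = G.src e') (h2 : G.tgt e' = G.src e) :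
    False := by
  have hp := G.acyclic (G.src e)
    (((Quiver.Path.nil.cons (edgeHom G e)).cons ⟨e', h1.symm, h2⟩ :
      Quiver.Path (G.src e) (G.src e)))
  simp at hp

theorem aux_pmap_comp (φ : G ⟶ H) (ψ : H ⟶ K) {a b : G.V} (p : Quiver.Path a b) :
    pmap (φ ≫ ψ) p = pmap ψ (pmap φ p) := rfl

theorem aux_edgePath_comp (φ : G ⟶ H) (ψ : H ⟶ K) (e : G.E) :
    edgePath (φ ≫ ψ) e = pmap ψ (edgePath φ e) := rfl

theorem aux_pmap_length_zero (ψ : G ⟶ H) {a b : G.V} (p : Quiver.Path a b)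
    (hp : p.length = 0) : (pmap ψ p).length = 0 := by
  cases p with
  | nil =>
    have : pmap ψ (Quiver.Path.nil : Quiver.Path a a) = 𝟙 ((ψ : Paths G.V ⥤ Paths H.V).obj a) :=
      (ψ : Paths G.V ⥤ Paths H.V).map_id a
    rw [pmap] at this
    rw [pmap, this]; rfl
  | cons q f => simp at hp

theorem aux_pmap_cons (ψ : G ⟶ H) {a b c : G.V} (p : Quiver.Path a b) (f : b ⟶ c) :
    pmap ψ (p.cons f) = (pmap ψ p).comp (pmap ψ f.toPath) :=
  (ψ : Paths G.V ⥤ Paths H.V).map_comp p f.toPath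

theorem aux_pathEdges_pmap_single (ψ : G ⟶ H) {a b : G.V} (p : Quiver.Path a b) (h : G.E)
    (hp : pathEdges p = [h]) : pathEdges (pmap ψ p) = pathEdges (edgePath ψ h) := by
  cases p with
  | nil => simp [pathEdges] at hp
  | cons q f =>
    have hq : pathEdges q = [] ∧ homEdge f = h :=
      aux_singleton_append _ _ _ (by simpa using hp)
    have hq0 : q.length = 0 := by
      rw [← aux_length_pathEdges, hq.1]; rfl
    cases q with
    | nil =>
      obtain ⟨e, he1, he2⟩ := f
      obtain rfl : e = h := hq.2
      subst he1; subst he2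
      rfl
    | cons q' f' => simp at hq0

end PathAux

/-! ### Composite morphism lemmas -/

section CompAux

variable {G H K : CausalNet}

theorem aux_mapsToEdge_length (φ : G ⟶ H) (e : G.E) (h : H.E) (hm : MapsToEdge φ e h) :
    (edgePath φ e).length = 1 := by
  rw [← aux_length_pathEdges, hm]; rfl

theorem aux_contraction_comp (φ : G ⟶ H) (ψ : H ⟶ K) (e : G.E)
    (hc : IsContractionEdge φ e) : IsContractionEdge (φ ≫ ψ) e := by
  unfold IsContractionEdge at *
  rw [aux_edgePath_comp]
  exact aux_pmap_length_zero ψ _ hc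

theorem aux_mapsToEdge_endpoints (φ : G ⟶ H) (e : G.E) (h : H.E) (hm : MapsToEdge φ e h) :
    vmap φ (G.src e) = H.src h ∧ vmap φ (G.tgt e) = H.tgt h :=
  aux_path_single (edgePath φ e) h hm

theorem aux_contraction_vmap (φ : G ⟶ H) (e : G.E) (hc : IsContractionEdge φ e) :
    vmap φ (G.src e) = vmap φ (G.tgt e) :=
  Quiver.Path.eq_of_length_zero (edgePath φ e) hc

theorem aux_exists_mapsToEdge (φ : G ⟶ H) (e : G.E) (h1 : (edgePath φ e).length = 1) :
    ∃ h : H.E, MapsToEdge φ e h := by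
  have : (pathEdges (edgePath φ e)).length = 1 := by rw [aux_length_pathEdges]; exact h1
  obtain ⟨h, hh⟩ := List.length_eq_one_iff.mp this
  exact ⟨h, hh⟩

end CompAux

/-! ### Simple contraction facts -/

section SCAux

variable {K L : CausalNet}

theorem aux_sc_len (φ : K ⟶ L) (hφ : IsSimpleContraction φ) (e : K.E) :
    (edgePath φ e).length ≤ 1 := by
  have := hφ.1.1.1.2 e
  unfold IsSubdivisionEdge at this
  omega

theorem aux_sc_card (φ : K ⟶ L) (hφ : IsSimpleContraction φ) :
    Fintype.card K.V = Fintype.card L.V + 1 := by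
  classical
  obtain ⟨w₁, w₂, hne, hvm, _hex, _hiff, hinj⟩ := hφ.2
  have hsurj : Function.Surjective (vmap φ) := fun v => hφ.1.1.1.1.1 v
  have e : {x : K.V // ¬ x = w₂} ≃ L.V := by
    refine Equiv.ofBijective (fun x => vmap φ x.1) ⟨?_, ?_⟩
    · rintro ⟨x, hx⟩ ⟨y, hy⟩ hxy
      rcases hinj x y hxy with h | ⟨hx', hy'⟩
      · exact Subtype.ext h
      · have hx1 : x = w₁ := hx'.resolve_right hx
        have hy1 : y = w₁ := hy'.resolve_right hy
        exact Subtype.ext (hx1.trans hy1.symm)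
    · intro v
      obtain ⟨u, hu⟩ := hsurj v
      by_cases h : u = w₂
      · exact ⟨⟨w₁, fun h' => hne h'⟩, by show vmap φ w₁ = v; rw [hvm, ← h]; exact hu⟩
      · exact ⟨⟨u, h⟩, hu⟩
  have h1 : Fintype.card {x : K.V // ¬ x = w₂} = Fintype.card L.V := Fintype.card_congr e
  have h2 : Fintype.card {x : K.V // ¬ x = w₂} =
      Fintype.card K.V - Fintype.card {x : K.V // x = w₂} :=
    Fintype.card_subtype_compl _
  have h3 : Fintype.card {x : K.V // x = w₂} = 1 := Fintype.card_subtype_eq w₂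
  have h4 : 0 < Fintype.card K.V := Fintype.card_pos_iff.mpr ⟨w₂⟩
  omega

end SCAux

/-! ### Contracted graph and the invariant -/

/-- The undirected graph on the vertices of `G` whose edges are the (undirected versions of)
the edges of `G` contracted by `μ`. -/
def contractedGraph {G K : CausalNet} (μ : G ⟶ K) : SimpleGraph G.V where
  Adj x y := x ≠ y ∧ ∃ e : G.E, IsContractionEdge μ e ∧
    ((G.src e = x ∧ G.tgt e = y) ∨ (G.src e = y ∧ G.tgt e = x))
  symm := by constructor; rintro x y ⟨h, e, hc, he⟩; exact ⟨h.symm, e, hc, he.symm⟩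
  loopless := ⟨fun x h => h.1 rfl⟩

theorem aux_reach_vmap {G K : CausalNet} (μ : G ⟶ K) {x y : G.V}
    (h : (contractedGraph μ).Reachable x y) : vmap μ x = vmap μ y := by
  obtain ⟨w⟩ := h
  induction w with
  | nil => rfl
  | cons hadj p ih =>
    obtain ⟨-, e, hc, he⟩ := hadj
    have hev := aux_contraction_vmap μ e hc
    rcases he with ⟨h1, h2⟩ | ⟨h1, h2⟩
    · rw [← h1, ← ih]; rw [← h2, ← hev]
    · rw [← h2, ← ih]; rw [← h1, hev]

theorem aux_isAcyclic_sup_edge {V : Type} {T : SimpleGraph V} (hT : T.IsAcyclic) {a b : V}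
    (hab : a ≠ b) (hr : ¬ T.Reachable a b) :
    (T ⊔ SimpleGraph.fromEdgeSet {s(a, b)}).IsAcyclic := by
  set T' := T ⊔ SimpleGraph.fromEdgeSet {s(a, b)} with hT'def
  have hTadj : ∀ x y : V, s(x, y) = s(a, b) → T.Adj x y → False := by
    intro x y hs hadj
    rw [Sym2.eq_iff] at hs
    rcases hs with ⟨rfl, rfl⟩ | ⟨rfl, rfl⟩
    · exact hr hadj.reachable
    · exact hr hadj.symm.reachable
  have hdel : T' \ SimpleGraph.fromEdgeSet {s(a, b)} = T := by
    ext x y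
    simp only [SimpleGraph.sdiff_adj, hT'def, SimpleGraph.sup_adj,
      SimpleGraph.fromEdgeSet_adj, Set.mem_singleton_iff]
    constructor
    · rintro ⟨h1 | h2, hn⟩
      · exact h1
      · exact absurd h2 hn
    · intro h
      refine ⟨Or.inl h, ?_⟩
      rintro ⟨hs, -⟩
      exact hTadj x y hs h
  intro v c hc
  by_cases hm : s(a, b) ∈ c.edges
  · have hadj : T'.Adj a b := Or.inr ⟨rfl, hab⟩
    have hnb : ¬ T'.IsBridge s(a, b) := by
      rw [SimpleGraph.isBridge_iff_forall_cycle_notMem hadj]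
      intro hb
      exact hb c hc hm
    rw [SimpleGraph.isBridge_iff] at hnb
    push_neg at hnb
    have := hnb
    rw [SimpleGraph.deleteEdges, hdel] at this
    exact hr this
  · have hsub : ∀ e ∈ c.edges, e ∈ T.edgeSet := by
      intro e he
      have h1 : e ∈ T'.edgeSet := c.edges_subset_edgeSet he
      rw [hT'def, SimpleGraph.edgeSet_sup] at h1
      rcases h1 with h1 | h1
      · exact h1
      · rw [SimpleGraph.edgeSet_fromEdgeSet] at h1
        obtain ⟨h2, -⟩ := h1
        rw [Set.mem_singleton_iff] at h2
        exact absurd (h2 ▸ he) hm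
    exact hT (c.transfer T hsub) (hc.transfer hsub)

theorem aux_invariant {G K : CausalNet} (μ : G ⟶ K) (hμ : PrimContrSeq G μ) :
    (∀ e : G.E, (edgePath μ e).length ≤ 1) ∧
    Function.Surjective (vmap μ) ∧
    (∀ a b : G.V, vmap μ a = vmap μ b → (contractedGraph μ).Reachable a b) ∧
    (contractedGraph μ).IsAcyclic := by
  induction hμ with
  | refl =>
    have hid : ∀ e : G.E, edgePath (𝟙 G) e = Quiver.Hom.toPath (edgeHom G e) := fun _ => rfl
    refine ⟨fun e => by rw [hid]; exact le_refl 1, fun v => ⟨v, rfl⟩, ?_, ?_⟩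
    · intro a b h
      exact (show a = b from h) ▸ SimpleGraph.Reachable.refl a
    · have : contractedGraph (𝟙 G) = ⊥ := by
        ext x y
        simp only [SimpleGraph.bot_adj, iff_false]
        rintro ⟨-, e, hc, -⟩
        unfold IsContractionEdge at hc
        rw [hid] at hc
        exact Nat.succ_ne_zero _ hc
      rw [this]
      exact SimpleGraph.isAcyclic_bot
  | @step K L μ φ hseq hsc hcond ih =>
    obtain ⟨hlen, hsurj, hreach, hacyc⟩ := ih
    obtain ⟨w₁, w₂, hne, hvm, hex, hiffc, hinj⟩ := hsc.2
    have hpair : ContractedPair φ w₁ w₂ := ⟨hne, hvm, hex, hiffc⟩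
    obtain ⟨hMne, a, b, hMeq⟩ := hcond w₁ w₂ hpair
    have hM_st : ∀ e ∈ {e : G.E | ∃ h : K.E, K.src h = w₁ ∧ K.tgt h = w₂ ∧ MapsToEdge μ e h},
        G.src e = a ∧ G.tgt e = b := by
      intro e he; rw [hMeq] at he; exact he
    -- characterization of composite contraction edges
    have hchar : ∀ e : G.E, IsContractionEdge (μ ≫ φ) e ↔ (IsContractionEdge μ e ∨
        ∃ h : K.E, K.src h = w₁ ∧ K.tgt h = w₂ ∧ MapsToEdge μ e h) := by
      intro e
      by_cases hc : IsContractionEdge μ e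
      · simp only [hc, true_or, iff_true]
        exact aux_contraction_comp μ φ e hc
      · have h1 : (edgePath μ e).length = 1 := by
          have := hlen e; unfold IsContractionEdge at hc; omega
        obtain ⟨h, hh⟩ := aux_exists_mapsToEdge μ e h1
        have h2 : pathEdges (edgePath (μ ≫ φ) e) = pathEdges (edgePath φ h) := by
          rw [aux_edgePath_comp]
          exact aux_pathEdges_pmap_single φ _ h hh
        have h3 : IsContractionEdge (μ ≫ φ) e ↔ IsContractionEdge φ h := by
          unfold IsContractionEdge
          rw [← aux_length_pathEdges, ← aux_length_pathEdges (edgePath φ h), h2]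
        rw [h3, hiffc h]
        constructor
        · intro hst
          exact Or.inr ⟨h, hst.1, hst.2, hh⟩
        · rintro (hc' | ⟨h', hs', ht', hm'⟩)
          · exact absurd hc' hc
          · have : h' = h := by
              have := hm'.symm.trans hh
              simpa using this
            exact ⟨this ▸ hs', this ▸ ht'⟩
    have hMvma : vmap μ a = w₁ ∧ vmap μ b = w₂ := by
      obtain ⟨e₀, he₀⟩ := hMne
      obtain ⟨hst1, hst2⟩ := hM_st e₀ he₀
      obtain ⟨h₀, hs₀, ht₀, hm₀⟩ := he₀
      obtain ⟨hp1, hp2⟩ := aux_mapsToEdge_endpoints μ e₀ h₀ hm₀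
      exact ⟨by rw [← hst1, hp1, hs₀], by rw [← hst2, hp2, ht₀]⟩
    have hab : a ≠ b := by
      intro h
      exact hne (by rw [← hMvma.1, ← hMvma.2, h])
    have hnr : ¬ (contractedGraph μ).Reachable a b := by
      intro h
      exact hne (by rw [← hMvma.1, ← hMvma.2, aux_reach_vmap μ h])
    have hgraph : contractedGraph (μ ≫ φ) =
        contractedGraph μ ⊔ SimpleGraph.fromEdgeSet {s(a, b)} := by
      ext x y
      simp only [SimpleGraph.sup_adj, SimpleGraph.fromEdgeSet_adj, Set.mem_singleton_iff]
      constructor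
      · rintro ⟨hxy, e, hce, he⟩
        rcases (hchar e).mp hce with hc | hMe
        · exact Or.inl ⟨hxy, e, hc, he⟩
        · obtain ⟨hst1, hst2⟩ := hM_st e hMe
          right
          refine ⟨?_, hxy⟩
          rcases he with ⟨h1, h2⟩ | ⟨h1, h2⟩
          · rw [← h1, ← h2, hst1, hst2]
          · rw [← h1, ← h2, hst1, hst2, Sym2.eq_swap]
      · rintro (⟨hxy, e, hce, he⟩ | ⟨hs, hxy⟩)
        · exact ⟨hxy, e, (hchar e).mpr (Or.inl hce), he⟩
        · obtain ⟨e₀, he₀⟩ := hMne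
          obtain ⟨hst1, hst2⟩ := hM_st e₀ he₀
          refine ⟨hxy, e₀, (hchar e₀).mpr (Or.inr he₀), ?_⟩
          rw [Sym2.eq_iff] at hs
          rcases hs with ⟨rfl, rfl⟩ | ⟨rfl, rfl⟩
          · exact Or.inl ⟨hst1, hst2⟩
          · exact Or.inr ⟨hst1, hst2⟩
    refine ⟨?_, ?_, ?_, ?_⟩
    · intro e
      by_cases hc : IsContractionEdge μ e
      · have := aux_contraction_comp μ φ e hc
        unfold IsContractionEdge at this
        omega
      · have h1 : (edgePath μ e).length = 1 := by
          have := hlen e; unfold IsContractionEdge at hc; omega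
        obtain ⟨h, hh⟩ := aux_exists_mapsToEdge μ e h1
        have h2 : pathEdges (edgePath (μ ≫ φ) e) = pathEdges (edgePath φ h) := by
          rw [aux_edgePath_comp]
          exact aux_pathEdges_pmap_single φ _ h hh
        have h4 := aux_sc_len φ hsc h
        rw [← aux_length_pathEdges, h2, aux_length_pathEdges]
        exact h4
    · intro v
      obtain ⟨w, hw⟩ := hsc.1.1.1.1.1 v
      obtain ⟨x, hx⟩ := hsurj w
      refine ⟨x, ?_⟩
      show vmap φ (vmap μ x) = v
      rw [hx]; exact hw
    · intro x y h
      have h' : vmap φ (vmap μ x) = vmap φ (vmap μ y) := h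
      rw [hgraph]
      have hadj' : (contractedGraph μ ⊔ SimpleGraph.fromEdgeSet {s(a, b)}).Adj a b :=
        Or.inr ⟨rfl, hab⟩
      have rA : ∀ z : G.V, vmap μ z = w₁ →
          (contractedGraph μ ⊔ SimpleGraph.fromEdgeSet {s(a, b)}).Reachable z a := by
        intro z hz
        exact (hreach z a (by rw [hz, hMvma.1])).mono le_sup_left
      have rB : ∀ z : G.V, vmap μ z = w₂ →
          (contractedGraph μ ⊔ SimpleGraph.fromEdgeSet {s(a, b)}).Reachable z b := by
        intro z hz
        exact (hreach z b (by rw [hz, hMvma.2])).mono le_sup_left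
      rcases hinj _ _ h' with heq | ⟨hx, hy⟩
      · exact ((hreach x y heq).mono le_sup_left)
      · rcases hx with hx | hx <;> rcases hy with hy | hy
        · exact (rA x hx).trans (rA y hy).symm
        · exact ((rA x hx).trans hadj'.reachable).trans (rB y hy).symm
        · exact ((rB x hx).trans hadj'.symm.reachable).trans (rA y hy).symm
        · exact (rB x hx).trans (rB y hy).symm
    · rw [hgraph]
      exact aux_isAcyclic_sup_edge hacyc hab hnr

theorem aux_backward {G K : CausalNet} (μ : G ⟶ K) (hK : IsPoint K)
    (hμ : PrimContrSeq G μ) : IsCausalTree G := by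
  obtain ⟨hlen, hsurj, hreach, hacyc⟩ := aux_invariant μ hμ
  have hE : ∀ e : G.E, IsContractionEdge μ e := by
    intro e
    have hnil : pathEdges (edgePath μ e) = [] := by
      cases hpe : pathEdges (edgePath μ e) with
      | nil => rfl
      | cons h t => exact (hK.2.false h).elim
    unfold IsContractionEdge
    rw [← aux_length_pathEdges, hnil]
    rfl
  have hgr : contractedGraph μ = undirected G := by
    ext x y
    constructor
    · rintro ⟨hxy, e, -, he⟩; exact ⟨hxy, e, he⟩
    · rintro ⟨hxy, e, he⟩; exact ⟨hxy, e, hE e, he⟩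
  rw [hgr] at hreach hacyc
  obtain ⟨v₀, hv₀⟩ := hK.1
  obtain ⟨x₀, -⟩ := hsurj v₀
  haveI : Nonempty G.V := ⟨x₀⟩
  exact ⟨⟨fun x y => hreach x y ((hv₀ (vmap μ x)).trans (hv₀ (vmap μ y)).symm)⟩, hacyc⟩

/-! ### Forward direction: auxiliary lemmas -/

theorem aux_mapsToEdge_comp {G H K : CausalNet} (φ : G ⟶ H) (ψ : H ⟶ K)
    (hlen : ∀ e : G.E, (edgePath φ e).length ≤ 1) (e : G.E) (k : K.E) :
    MapsToEdge (φ ≫ ψ) e k ↔ ∃ h : H.E, MapsToEdge φ e h ∧ MapsToEdge ψ h k := by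
  by_cases hc : (edgePath φ e).length = 0
  · constructor
    · intro hm
      have h0 : (edgePath (φ ≫ ψ) e).length = 0 := by
        rw [aux_edgePath_comp]; exact aux_pmap_length_zero ψ _ hc
      have := aux_mapsToEdge_length _ _ _ hm
      omega
    · rintro ⟨h, hm, -⟩
      have := aux_mapsToEdge_length φ e h hm
      omega
  · have h1 : (edgePath φ e).length = 1 := by have := hlen e; omega
    obtain ⟨h₀, hh₀⟩ := aux_exists_mapsToEdge φ e h1
    have h2 : pathEdges (edgePath (φ ≫ ψ) e) = pathEdges (edgePath ψ h₀) := by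
      rw [aux_edgePath_comp]; exact aux_pathEdges_pmap_single ψ _ h₀ hh₀
    constructor
    · intro hm
      refine ⟨h₀, hh₀, ?_⟩
      unfold MapsToEdge at *
      rw [← h2]; exact hm
    · rintro ⟨h, hm, hk⟩
      have hh : h = h₀ := by have := hm.symm.trans hh₀; simpa using this
      subst hh
      unfold MapsToEdge at *
      rw [h2]; exact hk

theorem aux_point_of_card_one (G : CausalNet) (h : Fintype.card G.V = 1) : IsPoint G := by
  obtain ⟨x, hx⟩ := Fintype.card_eq_one_iff.mp h
  refine ⟨⟨x, hx⟩, ⟨fun e => ?_⟩⟩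
  exact aux_no_loop e ((hx (G.src e)).trans (hx (G.tgt e)).symm)

theorem aux_exists_leaf {V : Type} [Fintype V] {T : SimpleGraph V} (hT : T.IsTree)
    (h2 : 2 ≤ Fintype.card V) : ∃ v : V, ∃ u : V, T.Adj v u ∧ ∀ x : V, T.Adj v x → x = u := by
  classical
  have hdegpos : ∀ x : V, 0 < T.degree x := by
    intro x
    rw [T.degree_pos_iff_exists_adj x]
    obtain ⟨y, hy⟩ := Fintype.exists_ne_of_one_lt_card (by omega) x
    obtain ⟨w⟩ := hT.isConnected.preconnected x y
    cases w with
    | nil => exact absurd rfl hy.symm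
    | cons h p => exact ⟨_, h⟩
  have hsum : ∑ x : V, T.degree x = 2 * T.edgeFinset.card :=
    T.sum_degrees_eq_twice_card_edges
  have hcard : T.edgeFinset.card + 1 = Fintype.card V := hT.card_edgeFinset
  by_contra hno
  push_neg at hno
  have hdeg2 : ∀ x : V, 2 ≤ T.degree x := by
    intro x
    by_contra hlt
    push_neg at hlt
    have hdx : T.degree x = 1 := by have := hdegpos x; omega
    obtain ⟨u, hu⟩ := Finset.card_eq_one.mp (by rwa [← T.card_neighborFinset_eq_degree] at hdx)
    have hadj : T.Adj x u := by
      have : u ∈ T.neighborFinset x := by rw [hu]; exact Finset.mem_singleton_self u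
      exact (T.mem_neighborFinset x u).mp this
    have huniq : ∀ z, T.Adj x z → z = u := by
      intro z hz
      have : z ∈ T.neighborFinset x := (T.mem_neighborFinset x z).mpr hz
      rw [hu] at this
      exact Finset.mem_singleton.mp this
    obtain ⟨z, hz1, hz2⟩ := hno x u hadj
    exact hz2 (huniq z hz1)
  have hge : 2 * Fintype.card V ≤ ∑ x : V, T.degree x := by
    calc 2 * Fintype.card V = Finset.univ.card * 2 := by
          rw [Finset.card_univ]; ring
    _ ≤ ∑ x : V, T.degree x := Finset.card_nsmul_le_sum _ _ _ (fun x _ => hdeg2 x)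
  omega

theorem aux_cast_length {A : CausalNet} {a b b' : A.V} (h : b = b') (p : Quiver.Path a b) :
    ((Quiver.Path.cast rfl h p).length) = p.length := by
  subst h; rw [Quiver.Path.cast_rfl_rfl]

theorem aux_cast_pathEdges {A : CausalNet} {a b b' : A.V} (h : b = b') (p : Quiver.Path a b) :
    pathEdges (Quiver.Path.cast rfl h p) = pathEdges p := by
  subst h; rw [Quiver.Path.cast_rfl_rfl]

section Contract

variable (G : CausalNet) (v u w₁ w₂ : G.V)

/-- The causal-net obtained from `G` by deleting the vertex `v` and all edges incident to it. -/
noncomputable def delV : CausalNet where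
  V := {x : G.V // x ≠ v}
  E := {e : G.E // G.src e ≠ v ∧ G.tgt e ≠ v}
  src e := ⟨G.src e.1, e.2.1⟩
  tgt e := ⟨G.tgt e.1, e.2.2⟩
  fintypeV := Fintype.ofFinite _
  fintypeE := Fintype.ofFinite _
  acyclic := noCycleData_of_map _ _ G Subtype.val Subtype.val (fun _ => rfl) (fun _ => rfl)

variable (huv : u ≠ v)

/-- The vertex map sending `v` to `u` and fixing everything else. -/
noncomputable def rmap : G.V → (delV G v).V :=
  fun x => letI := Classical.propDecidable (x = v); if h : x = v then ⟨u, huv⟩ else ⟨x, h⟩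

theorem rmap_ne {x : G.V} (hx : x ≠ v) : rmap G v u huv x = ⟨x, hx⟩ := dif_neg hx

theorem rmap_v : rmap G v u huv v = ⟨u, huv⟩ := dif_pos rfl

theorem rmap_w₁ (hw : (w₁ = u ∧ w₂ = v) ∨ (w₁ = v ∧ w₂ = u)) :
    rmap G v u huv w₁ = ⟨u, huv⟩ := by
  rcases hw with ⟨h1, h2⟩ | ⟨h1, h2⟩
  · rw [h1, rmap_ne G v u huv huv]
  · rw [h1, rmap_v]

theorem rmap_w₂ (hw : (w₁ = u ∧ w₂ = v) ∨ (w₁ = v ∧ w₂ = u)) :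
    rmap G v u huv w₂ = ⟨u, huv⟩ := by
  rcases hw with ⟨h1, h2⟩ | ⟨h1, h2⟩
  · rw [h2, rmap_v]
  · rw [h2, rmap_ne G v u huv huv]

theorem aux_not_contr_ne (hinc : ∀ e : G.E, G.src e = v ∨ G.tgt e = v →
      G.src e = w₁ ∧ G.tgt e = w₂)
    {e : G.E} (hc : ¬ (G.src e = w₁ ∧ G.tgt e = w₂)) :
    G.src e ≠ v ∧ G.tgt e ≠ v := by
  constructor
  · intro h; exact hc (hinc e (Or.inl h))
  · intro h; exact hc (hinc e (Or.inr h))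

variable (hw : (w₁ = u ∧ w₂ = v) ∨ (w₁ = v ∧ w₂ = u))
variable (hinc : ∀ e : G.E, G.src e = v ∨ G.tgt e = v → G.src e = w₁ ∧ G.tgt e = w₂)

/-- The image of a single arrow under the leaf contraction. -/
noncomputable def contrArrow {a b : G.V} (f : a ⟶ b) :
    Quiver.Path (rmap G v u huv a) (rmap G v u huv b) :=
  letI := Classical.propDecidable (G.src f.1 = w₁ ∧ G.tgt f.1 = w₂)
  if hc : G.src f.1 = w₁ ∧ G.tgt f.1 = w₂ then
    Quiver.Path.cast rfl
      (by
        obtain ⟨e, h1, h2⟩ := f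
        obtain ⟨hc1, hc2⟩ := hc
        rw [← h1, ← h2, hc1, hc2, rmap_w₁ G v u w₁ w₂ huv hw, rmap_w₂ G v u w₁ w₂ huv hw])
      Quiver.Path.nil
  else
    Quiver.Hom.toPath
      (⟨⟨f.1, (aux_not_contr_ne G v w₁ w₂ hinc hc).1, (aux_not_contr_ne G v w₁ w₂ hinc hc).2⟩,
        by
          have hsv := (aux_not_contr_ne G v w₁ w₂ hinc hc).1
          have ha : a ≠ v := f.2.1 ▸ hsv
          exact Subtype.ext (by rw [rmap_ne G v u huv ha]; exact f.2.1),
        by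
          have htv := (aux_not_contr_ne G v w₁ w₂ hinc hc).2
          have hb : b ≠ v := f.2.2 ▸ htv
          exact Subtype.ext (by rw [rmap_ne G v u huv hb]; exact f.2.2)⟩ :
        rmap G v u huv a ⟶ rmap G v u huv b)

theorem contrArrow_pos {a b : G.V} (f : a ⟶ b) (hc : G.src f.1 = w₁ ∧ G.tgt f.1 = w₂) :
    (contrArrow G v u w₁ w₂ huv hw hinc f).length = 0 := by
  unfold contrArrow
  rw [dif_pos hc]
  rw [aux_cast_length]
  rfl

theorem contrArrow_neg {a b : G.V} (f : a ⟶ b) (hc : ¬ (G.src f.1 = w₁ ∧ G.tgt f.1 = w₂))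
    (h1 : G.src f.1 ≠ v) (h2 : G.tgt f.1 ≠ v) :
    pathEdges (contrArrow G v u w₁ w₂ huv hw hinc f) = [⟨f.1, h1, h2⟩] := by
  unfold contrArrow
  rw [dif_neg hc]
  show pathEdges (Quiver.Path.nil.cons _) = _
  rw [aux_pathEdges_cons, aux_pathEdges_nil]
  rfl

/-- The leaf contraction as a prefunctor into the path category. -/
noncomputable def contrPre : G.V ⥤q Paths (delV G v).V where
  obj := rmap G v u huv
  map := contrArrow G v u w₁ w₂ huv hw hinc

/-- The leaf contraction as a morphism of causal-nets. -/
noncomputable def contrF : G ⟶ delV G v :=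
  Paths.lift (contrPre G v u w₁ w₂ huv hw hinc)

theorem contrF_vmap (x : G.V) :
    vmap (contrF G v u w₁ w₂ huv hw hinc) x = rmap G v u huv x := rfl

theorem contrF_edgePath (e : G.E) :
    edgePath (contrF G v u w₁ w₂ huv hw hinc) e =
      contrArrow G v u w₁ w₂ huv hw hinc (edgeHom G e) :=
  Paths.lift_toPath (contrPre G v u w₁ w₂ huv hw hinc) (edgeHom G e)

theorem contrF_contraction_iff (e : G.E) :
    IsContractionEdge (contrF G v u w₁ w₂ huv hw hinc) e ↔
      (G.src e = w₁ ∧ G.tgt e = w₂) := by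
  unfold IsContractionEdge
  rw [contrF_edgePath]
  by_cases hc : G.src e = w₁ ∧ G.tgt e = w₂
  · exact iff_of_true (contrArrow_pos G v u w₁ w₂ huv hw hinc (edgeHom G e) hc) hc
  · refine iff_of_false ?_ hc
    have hne := aux_not_contr_ne G v w₁ w₂ hinc (e := e) hc
    have hpe := contrArrow_neg G v u w₁ w₂ huv hw hinc (edgeHom G e) hc hne.1 hne.2
    intro h0
    have hl := aux_length_pathEdges (contrArrow G v u w₁ w₂ huv hw hinc (edgeHom G e))
    rw [hpe] at hl
    erw [h0] at hl
    simp at hl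

theorem contrF_mapsToEdge_iff (e : G.E) (h : (delV G v).E) :
    MapsToEdge (contrF G v u w₁ w₂ huv hw hinc) e h ↔
      (¬ (G.src e = w₁ ∧ G.tgt e = w₂) ∧ h.1 = e) := by
  unfold MapsToEdge
  rw [contrF_edgePath]
  by_cases hc : G.src e = w₁ ∧ G.tgt e = w₂
  · refine iff_of_false ?_ (fun hx => hx.1 hc)
    intro hm
    have hl := aux_length_pathEdges (contrArrow G v u w₁ w₂ huv hw hinc (edgeHom G e))
    erw [hm] at hl
    rw [contrArrow_pos G v u w₁ w₂ huv hw hinc (edgeHom G e) hc] at hl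
    simp at hl
  · have hne := aux_not_contr_ne G v w₁ w₂ hinc (e := e) hc
    erw [contrArrow_neg G v u w₁ w₂ huv hw hinc (edgeHom G e) hc hne.1 hne.2]
    constructor
    · intro hm
      have : (⟨e, hne.1, hne.2⟩ : (delV G v).E) = h := by
        exact (List.cons.inj hm).1
      exact ⟨hc, by rw [← this]⟩
    · rintro ⟨-, hh⟩
      have : h = ⟨e, hne.1, hne.2⟩ := Subtype.ext hh
      rw [this]
      rfl

theorem aux_mapsToEdge_id {A : CausalNet} (e h : A.E) : MapsToEdge (𝟙 A) e h ↔ e = h := by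
  unfold MapsToEdge
  have hid : edgePath (𝟙 A) e = Quiver.Hom.toPath (edgeHom A e) := rfl
  rw [hid]
  show pathEdges (Quiver.Path.nil.cons _) = _ ↔ _
  erw [aux_pathEdges_cons, aux_pathEdges_nil]
  constructor
  · intro hh; exact (List.cons.inj hh).1
  · intro hh; simp [homEdge, edgeHom, hh]

theorem contrF_len (e : G.E) : (edgePath (contrF G v u w₁ w₂ huv hw hinc) e).length ≤ 1 := by
  rw [contrF_edgePath]
  by_cases hc : G.src e = w₁ ∧ G.tgt e = w₂
  · erw [contrArrow_pos G v u w₁ w₂ huv hw hinc (edgeHom G e) hc]; omega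
  · have hne := aux_not_contr_ne G v w₁ w₂ hinc (e := e) hc
    have hpe := contrArrow_neg G v u w₁ w₂ huv hw hinc (edgeHom G e) hc hne.1 hne.2
    erw [← aux_length_pathEdges, hpe]
    exact Nat.le_refl _

theorem contrF_simple (hex : ∃ e : G.E, G.src e = w₁ ∧ G.tgt e = w₂) :
    IsSimpleContraction (contrF G v u w₁ w₂ huv hw hinc) := by
  have hw12 : w₁ ≠ w₂ := by
    rcases hw with ⟨h1, h2⟩ | ⟨h1, h2⟩
    · rw [h1, h2]; exact huv
    · rw [h1, h2]; exact huv.symm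
  have hmemuv : ∀ z : G.V, (z = u ∨ z = v) → (z = w₁ ∨ z = w₂) := by
    rcases hw with ⟨rfl, rfl⟩ | ⟨rfl, rfl⟩ <;> tauto
  have hvm : vmap (contrF G v u w₁ w₂ huv hw hinc) w₁ =
      vmap (contrF G v u w₁ w₂ huv hw hinc) w₂ := by
    rw [contrF_vmap, contrF_vmap, rmap_w₁ G v u w₁ w₂ huv hw, rmap_w₂ G v u w₁ w₂ huv hw]
  refine ⟨⟨⟨⟨⟨?_, ?_⟩, ?_⟩, ?_⟩, ?_⟩, ?_⟩
  · -- quotient on vertices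
    intro x
    exact ⟨x.1, by rw [contrF_vmap, rmap_ne G v u huv x.2]; exact Subtype.ext rfl⟩
  · -- quotient on edges
    intro h
    refine ⟨h.1, (contrF_mapsToEdge_iff G v u w₁ w₂ huv hw hinc h.1 h).mpr ⟨?_, rfl⟩⟩
    rintro ⟨hs, ht⟩
    rcases hw with ⟨h1, h2⟩ | ⟨h1, h2⟩
    · exact h.2.2 (by rw [ht, h2])
    · exact h.2.1 (by rw [hs, h1])
  · -- no subdivision
    intro e hs
    have := contrF_len G v u w₁ w₂ huv hw hinc e
    unfold IsSubdivisionEdge at hs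
    omega
  · -- no multiple edge
    intro h e₁ e₂ hm₁ hm₂
    have h1 := ((contrF_mapsToEdge_iff G v u w₁ w₂ huv hw hinc e₁ h).mp hm₁).2
    have h2 := ((contrF_mapsToEdge_iff G v u w₁ w₂ huv hw hinc e₂ h).mp hm₂).2
    rw [← h1, ← h2]
  · -- fibers connected
    intro x
    by_cases hx : x.1 = u
    · have hxu : x = ⟨u, huv⟩ := Subtype.ext hx
      subst hxu
      have hmem : ∀ w : G.V, vmap (contrF G v u w₁ w₂ huv hw hinc) w = ⟨u, huv⟩ ↔
          (w = w₁ ∨ w = w₂) := by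
        intro w
        rw [contrF_vmap]
        constructor
        · intro hh
          by_cases hwv : w = v
          · exact hmemuv w (Or.inr hwv)
          · rw [rmap_ne G v u huv hwv] at hh
            exact hmemuv w (Or.inl (congrArg Subtype.val hh))
        · intro hh
          have hwuv : w = u ∨ w = v := by
            rcases hw with ⟨rfl, rfl⟩ | ⟨rfl, rfl⟩ <;> tauto
          rcases hwuv with h | h
          · rw [h, rmap_ne G v u huv huv]
          · rw [h, rmap_v]
      obtain ⟨e₀, hs₀, ht₀⟩ := hex
      have hmw₁ : vmap (contrF G v u w₁ w₂ huv hw hinc) w₁ = ⟨u, huv⟩ :=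
        (hmem w₁).mpr (Or.inl rfl)
      have hmw₂ : vmap (contrF G v u w₁ w₂ huv hw hinc) w₂ = ⟨u, huv⟩ :=
        (hmem w₂).mpr (Or.inr rfl)
      have hc₀ : IsContractionEdge (contrF G v u w₁ w₂ huv hw hinc) e₀ :=
        (contrF_contraction_iff G v u w₁ w₂ huv hw hinc e₀).mpr ⟨hs₀, ht₀⟩
      have he₀mem : e₀ ∈ {e : G.E | IsContractionEdge (contrF G v u w₁ w₂ huv hw hinc) e ∧
          vmap (contrF G v u w₁ w₂ huv hw hinc) (G.src e) = ⟨u, huv⟩} :=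
        ⟨hc₀, by rw [hs₀]; exact hmw₁⟩
      have hadj : (undirected (fiber (contrF G v u w₁ w₂ huv hw hinc) ⟨u, huv⟩)).Adj
          ⟨w₁, hmw₁⟩ ⟨w₂, hmw₂⟩ := by
        refine ⟨fun hh => hw12 (congrArg Subtype.val hh), ⟨e₀, he₀mem⟩, Or.inl ⟨?_, ?_⟩⟩
        · exact Subtype.ext hs₀
        · exact Subtype.ext ht₀
      haveI : Nonempty (fiber (contrF G v u w₁ w₂ huv hw hinc) ⟨u, huv⟩).V :=
        ⟨⟨w₁, show w₁ ∈ {w : G.V | vmap (contrF G v u w₁ w₂ huv hw hinc) w = ⟨u, huv⟩} from hmw₁⟩⟩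
      refine ⟨fun p q => ?_⟩
      · have hp := (hmem p.1).mp p.2
        have hq := (hmem q.1).mp q.2
        have hrw : ∀ (z : G.V) (hz : z = w₁ ∨ z = w₂)
            (hzz : vmap (contrF G v u w₁ w₂ huv hw hinc) z = ⟨u, huv⟩), True := fun _ _ _ => trivial
        rcases hp with hp | hp <;> rcases hq with hq | hq
        · rw [show p = q from Subtype.ext (hp.trans hq.symm)]
        · rw [show p = (⟨w₁, hmw₁⟩ : {w : G.V // vmap (contrF G v u w₁ w₂ huv hw hinc) w = ⟨u, huv⟩}) from Subtype.ext hp,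
            show q = (⟨w₂, hmw₂⟩ : {w : G.V // vmap (contrF G v u w₁ w₂ huv hw hinc) w = ⟨u, huv⟩}) from Subtype.ext hq]
          exact hadj.reachable
        · rw [show p = (⟨w₂, hmw₂⟩ : {w : G.V // vmap (contrF G v u w₁ w₂ huv hw hinc) w = ⟨u, huv⟩}) from Subtype.ext hp,
            show q = (⟨w₁, hmw₁⟩ : {w : G.V // vmap (contrF G v u w₁ w₂ huv hw hinc) w = ⟨u, huv⟩}) from Subtype.ext hq]
          exact hadj.symm.reachable
        · rw [show p = q from Subtype.ext (hp.trans hq.symm)]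
    · have huniq : ∀ w : G.V, vmap (contrF G v u w₁ w₂ huv hw hinc) w = x → w = x.1 := by
        intro w hwx
        rw [contrF_vmap] at hwx
        by_cases hwv : w = v
        · subst hwv
          rw [rmap_v] at hwx
          exact absurd (congrArg Subtype.val hwx).symm hx
        · rw [rmap_ne G v u huv hwv] at hwx
          exact congrArg Subtype.val hwx
      haveI : Nonempty (fiber (contrF G v u w₁ w₂ huv hw hinc) x).V :=
        ⟨⟨x.1, by show vmap (contrF G v u w₁ w₂ huv hw hinc) x.1 = x
                  rw [contrF_vmap, rmap_ne G v u huv x.2]; exact Subtype.ext rfl⟩⟩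
      refine ⟨fun p q => ?_⟩
      rw [show p = q from Subtype.ext ((huniq p.1 p.2).trans (huniq q.1 q.2).symm)]
  · -- the contracted pair
    refine ⟨w₁, w₂, hw12, hvm, hex, fun e => contrF_contraction_iff G v u w₁ w₂ huv hw hinc e, ?_⟩
    intro a b hab
    rw [contrF_vmap, contrF_vmap] at hab
    by_cases ha : a = v <;> by_cases hb : b = v
    · exact Or.inl (by rw [ha, hb])
    · rw [ha, rmap_v, rmap_ne G v u huv hb] at hab
      have : u = b := congrArg Subtype.val hab
      exact Or.inr ⟨hmemuv a (Or.inr ha), hmemuv b (Or.inl this.symm)⟩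
    · rw [hb, rmap_v, rmap_ne G v u huv ha] at hab
      have : a = u := congrArg Subtype.val hab
      exact Or.inr ⟨hmemuv a (Or.inl this), hmemuv b (Or.inr hb)⟩
    · rw [rmap_ne G v u huv ha, rmap_ne G v u huv hb] at hab
      exact Or.inl (congrArg Subtype.val hab)

theorem contrF_first (hex : ∃ e : G.E, G.src e = w₁ ∧ G.tgt e = w₂) :
    ∀ w₁' w₂' : G.V, ContractedPair (contrF G v u w₁ w₂ huv hw hinc) w₁' w₂' →
      IsMultiEdge G {e : G.E | ∃ h : G.E, G.src h = w₁' ∧ G.tgt h = w₂' ∧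
        MapsToEdge (𝟙 G) e h} := by
  intro w₁' w₂' hpair
  obtain ⟨hne', hvm', hex', hiff'⟩ := hpair
  obtain ⟨e₀, hs₀, ht₀⟩ := hex
  have hc₀ : IsContractionEdge (contrF G v u w₁ w₂ huv hw hinc) e₀ :=
    (contrF_contraction_iff G v u w₁ w₂ huv hw hinc e₀).mpr ⟨hs₀, ht₀⟩
  obtain ⟨hs₀', ht₀'⟩ := (hiff' e₀).mp hc₀
  have hw1' : w₁' = w₁ := by rw [← hs₀', hs₀]
  have hw2' : w₂' = w₂ := by rw [← ht₀', ht₀]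
  rw [hw1', hw2']
  refine ⟨⟨e₀, e₀, hs₀, ht₀, (aux_mapsToEdge_id e₀ e₀).mpr rfl⟩, w₁, w₂, ?_⟩
  ext e
  constructor
  · rintro ⟨h, hs, ht, hm⟩
    have : e = h := (aux_mapsToEdge_id e h).mp hm
    exact ⟨this ▸ hs, this ▸ ht⟩
  · rintro ⟨hs, ht⟩
    exact ⟨e, hs, ht, (aux_mapsToEdge_id e e).mpr rfl⟩

theorem contrF_pull (a₁ b₁ : (delV G v).V) (e : G.E) :
    (∃ e₁ : (delV G v).E, (delV G v).src e₁ = a₁ ∧ (delV G v).tgt e₁ = b₁ ∧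
      MapsToEdge (contrF G v u w₁ w₂ huv hw hinc) e e₁) ↔
    (G.src e = a₁.1 ∧ G.tgt e = b₁.1) := by
  constructor
  · rintro ⟨e₁, hs, ht, hm⟩
    obtain ⟨hnc, hval⟩ := (contrF_mapsToEdge_iff G v u w₁ w₂ huv hw hinc e e₁).mp hm
    constructor
    · rw [← hval]; exact congrArg Subtype.val hs
    · rw [← hval]; exact congrArg Subtype.val ht
  · rintro ⟨hs, ht⟩
    have hsv : G.src e ≠ v := by rw [hs]; exact a₁.2
    have htv : G.tgt e ≠ v := by rw [ht]; exact b₁.2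
    have hnc : ¬ (G.src e = w₁ ∧ G.tgt e = w₂) := by
      rintro ⟨h1, h2⟩
      rcases hw with ⟨hh1, hh2⟩ | ⟨hh1, hh2⟩
      · exact htv (by rw [h2, hh2])
      · exact hsv (by rw [h1, hh1])
    exact ⟨⟨e, hsv, htv⟩, Subtype.ext hs, Subtype.ext ht,
      (contrF_mapsToEdge_iff G v u w₁ w₂ huv hw hinc e _).mpr ⟨hnc, rfl⟩⟩

theorem delV_card : Fintype.card (delV G v).V + 1 = Fintype.card G.V := by
  classical
  have h2 : Fintype.card {x : G.V // ¬ x = v} =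
      Fintype.card G.V - Fintype.card {x : G.V // x = v} :=
    Fintype.card_subtype_compl _
  have h3 : Fintype.card {x : G.V // x = v} = 1 := Fintype.card_subtype_eq v
  have h4 : 0 < Fintype.card G.V := Fintype.card_pos_iff.mpr ⟨v⟩
  have h5 : Fintype.card (delV G v).V = Fintype.card {x : G.V // ¬ x = v} :=
    Fintype.card_congr (Equiv.refl _)
  omega

theorem delV_tree (htree : IsCausalTree G)
    (hadj : (undirected G).Adj v u)
    (huniq : ∀ x : G.V, (undirected G).Adj v x → x = u) :
    IsCausalTree (delV G v) := by
  have hhom : ∀ {p q : (delV G v).V}, (undirected (delV G v)).Adj p q →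
      (undirected G).Adj p.1 q.1 := by
    rintro p q ⟨hne, e, he⟩
    refine ⟨fun hh => hne (Subtype.ext hh), ⟨e.1, ?_⟩⟩
    rcases he with ⟨h1, h2⟩ | ⟨h1, h2⟩
    · exact Or.inl ⟨congrArg Subtype.val h1, congrArg Subtype.val h2⟩
    · exact Or.inr ⟨congrArg Subtype.val h1, congrArg Subtype.val h2⟩
  constructor
  · -- connected
    have key : ∀ n : ℕ, ∀ x y : G.V, ∀ (hx : x ≠ v) (hy : y ≠ v)
        (w : (undirected G).Walk x y), w.length ≤ n →
        (undirected (delV G v)).Reachable ⟨x, hx⟩ ⟨y, hy⟩ := by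
      intro n
      induction n with
      | zero =>
        intro x y hx hy w hw
        cases w with
        | nil => exact SimpleGraph.Reachable.refl _
        | cons h p => simp at hw
      | succ n ihn =>
        intro x y hx hy w hw
        cases w with
        | nil => exact SimpleGraph.Reachable.refl _
        | @cons _ z _ h p =>
          by_cases hz : z = v
          · have hxu : x = u := huniq x (hz ▸ h.symm)
            cases p with
            | nil => exact absurd hz hy
            | @cons _ z₂ _ h₂ p₂ =>
              have hz₂ : z₂ = u := huniq z₂ (hz ▸ h₂)
              have hz₂v : z₂ ≠ v := by rw [hz₂]; exact hadj.ne.symm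
              have hr := ihn z₂ y hz₂v hy p₂ (by simp at hw ⊢; omega)
              have heq : (⟨x, hx⟩ : {a : G.V // a ≠ v}) = ⟨z₂, hz₂v⟩ :=
                Subtype.ext (show x = z₂ by rw [hxu, hz₂])
              rw [heq]
              exact hr
          · have hadj₁ : (undirected (delV G v)).Adj ⟨x, hx⟩ ⟨z, hz⟩ := by
              obtain ⟨hne', e, he⟩ := h
              have hsv : G.src e ≠ v ∧ G.tgt e ≠ v := by
                rcases he with ⟨h1, h2⟩ | ⟨h1, h2⟩
                · exact ⟨by rw [h1]; exact hx, by rw [h2]; exact hz⟩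
                · exact ⟨by rw [h1]; exact hz, by rw [h2]; exact hx⟩
              refine ⟨fun hh => hne' (congrArg Subtype.val hh), ⟨e, hsv⟩, ?_⟩
              rcases he with ⟨h1, h2⟩ | ⟨h1, h2⟩
              · exact Or.inl ⟨Subtype.ext h1, Subtype.ext h2⟩
              · exact Or.inr ⟨Subtype.ext h1, Subtype.ext h2⟩
            exact hadj₁.reachable.trans (ihn z y hz hy p (by simp at hw ⊢; omega))
    haveI : Nonempty (delV G v).V := ⟨⟨u, hadj.ne.symm⟩⟩
    refine ⟨fun p q => ?_⟩
    obtain ⟨w⟩ := htree.isConnected.preconnected p.1 q.1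
    exact key w.length p.1 q.1 p.2 q.2 w le_rfl
  · -- acyclic
    intro x c hc
    let f : (undirected (delV G v)) →g (undirected G) := ⟨Subtype.val, fun h => hhom h⟩
    exact htree.IsAcyclic (c.map f)
      ((SimpleGraph.Walk.map_isCycle_iff_of_injective Subtype.val_injective).mpr hc)

end Contract

theorem aux_prepend {G G₁ : CausalNet} (φ₀ : G ⟶ G₁)
    (hlen : ∀ e : G.E, (edgePath φ₀ e).length ≤ 1)
    (hsc : IsSimpleContraction φ₀)
    (hfirst : ∀ w₁ w₂ : G.V, ContractedPair φ₀ w₁ w₂ →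
      IsMultiEdge G {e : G.E | ∃ h : G.E, G.src h = w₁ ∧ G.tgt h = w₂ ∧ MapsToEdge (𝟙 G) e h})
    (hpull : ∀ a₁ b₁ : G₁.V, ∃ a b : G.V, ∀ e : G.E,
      (∃ e₁ : G₁.E, G₁.src e₁ = a₁ ∧ G₁.tgt e₁ = b₁ ∧ MapsToEdge φ₀ e e₁) ↔
        (G.src e = a ∧ G.tgt e = b))
    {K : CausalNet} (ν : G₁ ⟶ K) (hν : PrimContrSeq G₁ ν) :
    PrimContrSeq G (φ₀ ≫ ν) := by
  induction hν with
  | refl =>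
    rw [Category.comp_id]
    rw [show φ₀ = 𝟙 G ≫ φ₀ from (Category.id_comp φ₀).symm]
    exact PrimContrSeq.step (𝟙 G) φ₀ PrimContrSeq.refl hsc hfirst
  | @step K L ν ψ hseq hψ hcond ih =>
    rw [← Category.assoc]
    refine PrimContrSeq.step (φ₀ ≫ ν) ψ ih hψ ?_
    intro w₁' w₂' hpair
    obtain ⟨⟨e₀K, he₀K⟩, a₁, b₁, hM₁⟩ := hcond w₁' w₂' hpair
    obtain ⟨a, b, hab⟩ := hpull a₁ b₁
    have hset : {e : G.E | ∃ h : K.E, K.src h = w₁' ∧ K.tgt h = w₂' ∧ MapsToEdge (φ₀ ≫ ν) e h}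
        = {e : G.E | G.src e = a ∧ G.tgt e = b} := by
      ext e
      constructor
      · rintro ⟨h, hs, ht, hm⟩
        rw [aux_mapsToEdge_comp φ₀ ν hlen] at hm
        obtain ⟨e₁, hm₀, hm₁⟩ := hm
        have he₁ : e₁ ∈ {e₁ : G₁.E | ∃ h : K.E, K.src h = w₁' ∧ K.tgt h = w₂' ∧
            MapsToEdge ν e₁ h} := ⟨h, hs, ht, hm₁⟩
        rw [hM₁] at he₁
        exact (hab e).mp ⟨e₁, he₁.1, he₁.2, hm₀⟩
      · intro he
        obtain ⟨e₁, h1, h2, hm₀⟩ := (hab e).mpr he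
        have he₁ : e₁ ∈ {e₁ : G₁.E | G₁.src e₁ = a₁ ∧ G₁.tgt e₁ = b₁} := ⟨h1, h2⟩
        rw [← hM₁] at he₁
        obtain ⟨h, hs, ht, hm₁⟩ := he₁
        exact ⟨h, hs, ht, (aux_mapsToEdge_comp φ₀ ν hlen e h).mpr ⟨e₁, hm₀, hm₁⟩⟩
    rw [hM₁] at he₀K
    obtain ⟨e, hm⟩ := hsc.1.1.1.1.2 e₀K
    refine ⟨?_, a, b, hset⟩
    rw [hset]
    exact ⟨e, (hab e).mp ⟨e₀K, he₀K.1, he₀K.2, hm⟩⟩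

theorem aux_forward : ∀ (n : ℕ) (G : CausalNet), Fintype.card G.V = n → IsCausalTree G →
    ∃ (K : CausalNet) (μ : G ⟶ K), IsPoint K ∧ PrimContrSeq G μ := by
  intro n
  induction n using Nat.strong_induction_on with
  | _ n ih =>
    intro G hcard htree
    have hpos : 0 < Fintype.card G.V := by
      haveI := htree.isConnected.nonempty
      exact Fintype.card_pos_iff.mpr this
    by_cases h1 : Fintype.card G.V = 1
    · exact ⟨G, 𝟙 G, aux_point_of_card_one G h1, PrimContrSeq.refl⟩
    · have h2 : 2 ≤ Fintype.card G.V := by omega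
      obtain ⟨v, u, hadj, huniq⟩ := aux_exists_leaf htree h2
      have huv : u ≠ v := hadj.ne.symm
      obtain ⟨w₁, w₂, hw, hex⟩ : ∃ w₁ w₂ : G.V,
          ((w₁ = u ∧ w₂ = v) ∨ (w₁ = v ∧ w₂ = u)) ∧
            (∃ e : G.E, G.src e = w₁ ∧ G.tgt e = w₂) := by
        by_cases hd : ∃ e : G.E, G.src e = u ∧ G.tgt e = v
        · exact ⟨u, v, Or.inl ⟨rfl, rfl⟩, hd⟩
        · obtain ⟨hne, e, he⟩ := hadj
          rcases he with ⟨hs, ht⟩ | ⟨hs, ht⟩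
          · exact ⟨v, u, Or.inr ⟨rfl, rfl⟩, ⟨e, hs, ht⟩⟩
          · exact absurd ⟨e, hs, ht⟩ hd
      obtain ⟨e₀, hs₀, ht₀⟩ := hex
      have hinc : ∀ e : G.E, G.src e = v ∨ G.tgt e = v → G.src e = w₁ ∧ G.tgt e = w₂ := by
        intro e hcase
        rcases hcase with hsv | htv
        · have hadj2 : (undirected G).Adj v (G.tgt e) :=
            ⟨by rw [← hsv]; exact aux_no_loop e, e, Or.inl ⟨hsv, rfl⟩⟩
          have htu : G.tgt e = u := huniq _ hadj2
          rcases hw with ⟨hw1, hw2⟩ | ⟨hw1, hw2⟩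
          · exact (aux_no_two_cycle e₀ e (by rw [ht₀, hw2, hsv]) (by rw [htu, hs₀, hw1])).elim
          · exact ⟨by rw [hw1]; exact hsv, by rw [hw2]; exact htu⟩
        · have hadj2 : (undirected G).Adj v (G.src e) :=
            ⟨by rw [← htv]; exact (aux_no_loop e).symm, e, Or.inr ⟨rfl, htv⟩⟩
          have hsu : G.src e = u := huniq _ hadj2
          rcases hw with ⟨hw1, hw2⟩ | ⟨hw1, hw2⟩
          · exact ⟨by rw [hw1]; exact hsu, by rw [hw2]; exact htv⟩
          · exact (aux_no_two_cycle e₀ e (by rw [ht₀, hw2, hsu]) (by rw [htv, hs₀, hw1])).elim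
      have hex' : ∃ e : G.E, G.src e = w₁ ∧ G.tgt e = w₂ := ⟨e₀, hs₀, ht₀⟩
      have hsc := contrF_simple G v u w₁ w₂ huv hw hinc hex'
      have htree₁ : IsCausalTree (delV G v) := delV_tree G v u htree hadj huniq
      have hcard₁ : Fintype.card (delV G v).V = n - 1 := by
        have := delV_card G v
        omega
      obtain ⟨K, ν, hK, hseq⟩ := ih (n - 1) (by omega) (delV G v) hcard₁ htree₁
      refine ⟨K, contrF G v u w₁ w₂ huv hw hinc ≫ ν, hK, ?_⟩
      refine aux_prepend _ (contrF_len G v u w₁ w₂ huv hw hinc) hsc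
        (contrF_first G v u w₁ w₂ huv hw hinc hex') ?_ ν hseq
      intro a₁ b₁
      exact ⟨a₁.1, b₁.1, fun e => contrF_pull G v u w₁ w₂ huv hw hinc a₁ b₁ e⟩

theorem causalTree_iff_primitive_contractible (G : CausalNet) :
    IsCausalTree G ↔
      ∃ (K : CausalNet) (μ : G ⟶ K), IsPoint K ∧ PrimContrSeq G μ := by
  constructor
  · intro h
    exact aux_forward (Fintype.card G.V) G rfl h
  · rintro ⟨K, μ, hK, hμ⟩
    exact aux_backward μ hK hμ

end CausalNets
end

section
/- A nonempty simple causal-net is harmonic if and only if it contains a hamiltonian path. -/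
open CategoryTheory

namespace CausalNets

variable {G H K : CausalNet}

section Aux

variable {G : CausalNet}

theorem pathVertices_ne_nil : ∀ {a b : G.V} (p : Quiver.Path a b), pathVertices p ≠ [] := by
  intro a b p
  cases p with
  | nil => simp [pathVertices]
  | cons q f => simp [pathVertices]

theorem pathVertices_decomp : ∀ {a b : G.V} (p : Quiver.Path a b) (u : G.V),
    u ∈ pathVertices p → ∃ (q : Quiver.Path a u) (r : Quiver.Path u b),
      pathVertices p = pathVertices q ++ (pathVertices r).tail := by
  intro a b p
  induction p with
  | nil =>
      intro u hu
      simp [pathVertices] at hu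
      subst hu
      exact ⟨Quiver.Path.nil, Quiver.Path.nil, by simp [pathVertices]⟩
  | @cons c b' p f ih =>
      intro u hu
      simp only [pathVertices, List.mem_append, List.mem_singleton] at hu
      rcases hu with hu | hu
      · obtain ⟨q, r, hqr⟩ := ih u hu
        refine ⟨q, r.cons f, ?_⟩
        simp only [pathVertices]
        rw [List.tail_append_of_ne_nil (pathVertices_ne_nil r), hqr, List.append_assoc]
      · subst hu
        exact ⟨p.cons f, Quiver.Path.nil, by simp [pathVertices]⟩

theorem reaches_of_mem {a b : G.V} (p : Quiver.Path a b) {u : G.V}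
    (hu : u ∈ pathVertices p) : Reaches G a u ∧ Reaches G u b := by
  obtain ⟨q, r, _⟩ := pathVertices_decomp p u hu
  exact ⟨⟨q⟩, ⟨r⟩⟩

theorem mem_comparable {a b : G.V} (p : Quiver.Path a b) {u u' : G.V}
    (hu : u ∈ pathVertices p) (hu' : u' ∈ pathVertices p) :
    Reaches G u u' ∨ Reaches G u' u := by
  obtain ⟨q, r, hqr⟩ := pathVertices_decomp p u hu
  rw [hqr, List.mem_append] at hu'
  rcases hu' with h | h
  · exact Or.inr (reaches_of_mem q h).2
  · exact Or.inl (reaches_of_mem r (List.mem_of_mem_tail h)).1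

theorem reaches_refl (a : G.V) : Reaches G a a := ⟨Quiver.Path.nil⟩

theorem reaches_trans {a b c : G.V} (h1 : Reaches G a b) (h2 : Reaches G b c) :
    Reaches G a c := ⟨h1.some.comp h2.some⟩

theorem length_eq_zero_of_cycle {v : G.V} (p : Quiver.Path v v) : p.length = 0 :=
  G.acyclic v p

theorem reaches_antisymm {a b : G.V} (h1 : Reaches G a b) (h2 : Reaches G b a) : a = b := by
  obtain ⟨p⟩ := h1
  obtain ⟨q⟩ := h2
  have h := length_eq_zero_of_cycle (p.comp q)
  rw [Quiver.Path.length_comp] at h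
  exact p.eq_of_length_zero (Nat.eq_zero_of_add_eq_zero_right h)

theorem reaches_of_edge (e : G.E) : Reaches G (G.src e) (G.tgt e) :=
  ⟨(Quiver.Hom.toPath (edgeHom G e))⟩

theorem not_reaches_tgt_src (e : G.E) (h : Reaches G (G.tgt e) (G.src e)) : False := by
  obtain ⟨p⟩ := h
  have := length_eq_zero_of_cycle ((Quiver.Hom.toPath (edgeHom G e)).comp p)
  rw [Quiver.Path.length_comp] at this
  simp [Quiver.Hom.toPath] at this

end Aux

theorem exists_last_arrow {K : CausalNet} {x y : K.V} (p : Quiver.Path x y) (h : x ≠ y) :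
    ∃ (w : K.V) (_ : Quiver.Path x w), Nonempty (w ⟶ y) := by
  cases p with
  | nil => exact absurd rfl h
  | cons q f => exact ⟨_, q, ⟨f⟩⟩
section FusionIso

variable {G H : CausalNet}

theorem cycle_length_zero {x y : H.V} (hxy : x = y) (p : Quiver.Path x y) :
    p.length = 0 := by
  subst hxy
  exact H.acyclic x p

theorem path_length_one {K : CausalNet} {a b : K.V} (p : Quiver.Path a b)
    (hp : p.length = 1) : ∃ f : a ⟶ b, p = f.toPath := by
  cases p with
  | nil => simp at hp
  | cons q f =>
      cases q with
      | nil => exact ⟨f, rfl⟩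
      | cons r g => simp [Quiver.Path.length] at hp

theorem pathEdges_toPath {K : CausalNet} {a b : K.V} (f : a ⟶ b) :
    pathEdges f.toPath = [homEdge f] := by
  simp [Quiver.Hom.toPath, pathEdges]

theorem fusion_edge_length {φ : G ⟶ H} (hfus : IsFusion φ) (e : G.E) :
    (edgePath φ e).length = 1 := by
  have h1 := hfus.1.2 e
  have h2 := hfus.2 e
  rw [IsSubdivisionEdge] at h1
  rw [IsContractionEdge] at h2
  omega

theorem map_arrow_length (φ : G ⟶ H) {a b : G.V} (f : a ⟶ b) :
    (pmap φ f.toPath).length = (edgePath φ (homEdge f)).length := by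
  obtain ⟨e, h1, h2⟩ := f
  subst h1; subst h2
  rfl

theorem pmap_length {φ : G ⟶ H} (hlen : ∀ e : G.E, (edgePath φ e).length = 1) :
    ∀ {a b : G.V} (p : Quiver.Path a b), (pmap φ p).length = p.length := by
  intro a b p
  induction p with
  | nil =>
      have h : pmap φ (Quiver.Path.nil : Quiver.Path a a) =
          𝟙 ((φ : Paths G.V ⥤ Paths H.V).obj a) :=
        (φ : Paths G.V ⥤ Paths H.V).map_id a
      rw [h]; rfl
  | @cons c d p f ih =>
      have hcomp : pmap φ (p.cons f) = (pmap φ p).comp (pmap φ f.toPath) :=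
        (φ : Paths G.V ⥤ Paths H.V).map_comp p f.toPath
      have hlen1 := map_arrow_length φ f
      rw [hlen (homEdge f)] at hlen1
      show (pmap φ (p.cons f)).length = p.length + 1
      rw [hcomp, Quiver.Path.length_comp, ih, hlen1]

theorem conj_arrow_eq {K : CausalNet} {c x y x' y' d : Paths K.V}
    (u : @Quiver.Hom K.V (CausalNet.quiver K) x y)
    (v : @Quiver.Hom K.V (CausalNet.quiver K) x' y')
    (hval : (Subtype.val u : K.E) = Subtype.val v)
    (p₁ : c = x) (p₂ : y = d) (q₁ : c = x') (q₂ : y' = d) :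
    eqToHom p₁ ≫ (Quiver.Hom.toPath u : x ⟶ y) ≫ eqToHom p₂ =
      (eqToHom q₁ ≫ (Quiver.Hom.toPath v : x' ⟶ y') ≫ eqToHom q₂ : c ⟶ d) := by
  subst p₁; subst p₂; subst q₁; subst q₂
  have : u = v := Subtype.ext hval
  rw [this]

end FusionIso
section IsoConstr

variable {G H : CausalNet}

theorem map_conj (φ : G ⟶ H) {c x y d : Paths G.V} (p₁ : c = x) (p₂ : y = d)
    (u : @Quiver.Hom G.V (CausalNet.quiver G) x y) :
    (φ : Paths G.V ⥤ Paths H.V).map (eqToHom p₁ ≫ (u.toPath : x ⟶ y) ≫ eqToHom p₂) =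
      eqToHom (congrArg (φ : Paths G.V ⥤ Paths H.V).obj p₁) ≫
        (φ : Paths G.V ⥤ Paths H.V).map (u.toPath : x ⟶ y) ≫
        eqToHom (congrArg (φ : Paths G.V ⥤ Paths H.V).obj p₂) := by
  subst p₁; subst p₂
  simp

theorem fusion_isIso {φ : G ⟶ H} (hsimple : IsSimpleNet G) (hfus : IsFusion φ)
    (hinj : Function.Injective (vmap φ)) : IsIso φ := by
  have hlen : ∀ e : G.E, (edgePath φ e).length = 1 := fusion_edge_length hfus
  choose F hF using fun e => path_length_one (edgePath φ e) (hlen e)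
  let ε : G.E → H.E := fun e => Subtype.val (F e)
  have hsrcε : ∀ e, H.src (ε e) = vmap φ (G.src e) := fun e => (F e).2.1
  have htgtε : ∀ e, H.tgt (ε e) = vmap φ (G.tgt e) := fun e => (F e).2.2
  have hmaps : ∀ (e : G.E) (h : H.E), MapsToEdge φ e h → ε e = h := by
    intro e h hm
    rw [MapsToEdge, hF e, pathEdges_toPath] at hm
    simp at hm; exact hm
  have hsurjε : Function.Surjective ε := fun h => (hfus.1.1.2 h).imp fun e he => hmaps e h he
  have hinjε : Function.Injective ε := by
    intro e₁ e₂ he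
    apply hsimple
    · apply hinj; rw [← hsrcε, ← hsrcε, he]
    · apply hinj; rw [← htgtε, ← htgtε, he]
  have hsurjσ : Function.Surjective (vmap φ) := fun v => hfus.1.1.1 v
  let σe : G.V ≃ H.V := Equiv.ofBijective _ ⟨hinj, hsurjσ⟩
  let εe : G.E ≃ H.E := Equiv.ofBijective _ ⟨hinjε, hsurjε⟩
  have harr : ∀ {x y : H.V} (g : @Quiver.Hom H.V (CausalNet.quiver H) x y),
      vmap φ (G.src (εe.symm (Subtype.val g))) = x ∧
      vmap φ (G.tgt (εe.symm (Subtype.val g))) = y := by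
    intro x y g
    constructor
    · rw [← hsrcε, show ε (εe.symm (Subtype.val g)) = Subtype.val g from
        εe.apply_symm_apply _]
      exact g.2.1
    · rw [← htgtε, show ε (εe.symm (Subtype.val g)) = Subtype.val g from
        εe.apply_symm_apply _]
      exact g.2.2
  let Ψ : Prefunctor H.V (Paths G.V) :=
    { obj := fun x => σe.symm x
      map := fun {x y} g =>
        eqToHom ((congrArg σe.symm (harr g).1).symm.trans (σe.symm_apply_apply _)) ≫
        (Quiver.Hom.toPath (edgeHom G (εe.symm (Subtype.val g)))) ≫
        eqToHom ((σe.symm_apply_apply _).symm.trans (congrArg σe.symm (harr g).2)) }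
  let ψ : H ⟶ G := Paths.lift Ψ
  have hobj1 : ((φ : Paths G.V ⥤ Paths H.V) ⋙ ψ).obj = (𝟭 (Paths G.V)).obj :=
    funext fun x => σe.symm_apply_apply x
  have hobj2 : (ψ ⋙ (φ : Paths G.V ⥤ Paths H.V)).obj = (𝟭 (Paths H.V)).obj :=
    funext fun y => σe.apply_symm_apply y
  have hc1 : φ ≫ ψ = 𝟙 G := by
    refine Paths.ext_functor hobj1 ?_
    intro a b u
    obtain ⟨ed, h1, h2⟩ := u
    subst h1; subst h2
    have step1 : ((φ : Paths G.V ⥤ Paths H.V) ⋙ ψ).map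
        (Quiver.Hom.toPath (edgeHom G ed)) = Ψ.map (F ed) := by
      show ψ.map (edgePath φ ed) = Ψ.map (F ed)
      rw [hF ed]
      exact Paths.lift_toPath Ψ (F ed)
    exact step1.trans
      (conj_arrow_eq (edgeHom G (εe.symm (Subtype.val (F ed)))) (edgeHom G ed)
        (show εe.symm (εe ed) = ed from εe.symm_apply_apply ed) _ _ _ _)
  have hc2 : ψ ≫ φ = 𝟙 H := by
    refine Paths.ext_functor hobj2 ?_
    intro a b u
    obtain ⟨hd, h1, h2⟩ := u
    subst h1; subst h2
    have step1 : (ψ ⋙ (φ : Paths G.V ⥤ Paths H.V)).map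
        (Quiver.Hom.toPath (edgeHom H hd)) =
        (φ : Paths G.V ⥤ Paths H.V).map (Ψ.map (edgeHom H hd)) := by
      show (φ : Paths G.V ⥤ Paths H.V).map (ψ.map (Quiver.Hom.toPath (edgeHom H hd))) = _
      rw [Paths.lift_toPath]
      rfl
    have step2 := map_conj φ
      ((congrArg σe.symm (harr (edgeHom H hd)).1).symm.trans (σe.symm_apply_apply _))
      ((σe.symm_apply_apply _).symm.trans (congrArg σe.symm (harr (edgeHom H hd)).2))
      (edgeHom G (εe.symm (Subtype.val (edgeHom H hd))))
    have step3 : (φ : Paths G.V ⥤ Paths H.V).map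
        (Quiver.Hom.toPath (edgeHom G (εe.symm (Subtype.val (edgeHom H hd))))) =
        Quiver.Hom.toPath (F (εe.symm hd)) := hF _
    refine (step1.trans (step2.trans ?_))
    rw [step3]
    exact conj_arrow_eq (F (εe.symm hd)) (edgeHom H hd)
      (show εe (εe.symm hd) = hd from εe.apply_symm_apply hd) _ _ _ _
  exact ⟨ψ, hc1, hc2⟩

end IsoConstr
section Merge

variable {G H : CausalNet}

theorem vmap_injective_of_isIso (φ : G ⟶ H) (hiso : IsIso φ) :
    Function.Injective (vmap φ) := by
  obtain ⟨ψ, h1, h2⟩ := hiso.out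
  intro x y hxy
  have hx : ψ.obj ((φ : Paths G.V ⥤ Paths H.V).obj x) = x := Functor.congr_obj h1 x
  have hy : ψ.obj ((φ : Paths G.V ⥤ Paths H.V).obj y) = y := Functor.congr_obj h1 y
  exact hx.symm.trans ((congrArg ψ.obj hxy).trans hy)

theorem merge_fusion (G : CausalNet) {a b : G.V} (hne : a ≠ b)
    (hab : ¬ Reaches G a b) (hba : ¬ Reaches G b a) :
    ∃ (H : CausalNet) (φ : G ⟶ H), IsFusion φ ∧ vmap φ a = vmap φ b := by
  classical
  set R : G.V → G.V → Prop := fun x y =>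
    Reaches G x y ∨ (Reaches G x a ∧ Reaches G b y) ∨ (Reaches G x b ∧ Reaches G a y)
    with hR
  have Rrefl : ∀ x, R x x := fun x => Or.inl (reaches_refl x)
  have Rtrans : ∀ x y z, R x y → R y z → R x z := by
    rintro x y z (h1 | ⟨h1, h1'⟩ | ⟨h1, h1'⟩) (h2 | ⟨h2, h2'⟩ | ⟨h2, h2'⟩)
    · exact Or.inl (reaches_trans h1 h2)
    · exact Or.inr (Or.inl ⟨reaches_trans h1 h2, h2'⟩)
    · exact Or.inr (Or.inr ⟨reaches_trans h1 h2, h2'⟩)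
    · exact Or.inr (Or.inl ⟨h1, reaches_trans h1' h2⟩)
    · exact Or.inr (Or.inl ⟨h1, h2'⟩)
    · exact Or.inl (reaches_trans h1 h2')
    · exact Or.inr (Or.inr ⟨h1, reaches_trans h1' h2⟩)
    · exact Or.inl (reaches_trans h1 h2')
    · exact Or.inr (Or.inr ⟨h1, h2'⟩)
  have hRa : ∀ y, R a y ↔ (Reaches G a y ∨ Reaches G b y) := by
    intro y
    constructor
    · rintro (h | ⟨h1, h2⟩ | ⟨h1, h2⟩)
      · exact Or.inl h
      · exact Or.inr h2
      · exact absurd h1 hab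
    · rintro (h | h)
      · exact Or.inl h
      · exact Or.inr (Or.inl ⟨reaches_refl a, h⟩)
  have hRb : ∀ y, R b y ↔ (Reaches G a y ∨ Reaches G b y) := by
    intro y
    constructor
    · rintro (h | ⟨h1, h2⟩ | ⟨h1, h2⟩)
      · exact Or.inr h
      · exact absurd h1 hba
      · exact Or.inl h2
    · rintro (h | h)
      · exact Or.inr (Or.inr ⟨reaches_refl b, h⟩)
      · exact Or.inl h
  have hRa' : ∀ x, R x a ↔ (Reaches G x a ∨ Reaches G x b) := by
    intro x
    constructor
    · rintro (h | ⟨h1, h2⟩ | ⟨h1, h2⟩)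
      · exact Or.inl h
      · exact Or.inl h1
      · exact Or.inr h1
    · rintro (h | h)
      · exact Or.inl h
      · exact Or.inr (Or.inr ⟨h, reaches_refl a⟩)
  have hRb' : ∀ x, R x b ↔ (Reaches G x a ∨ Reaches G x b) := by
    intro x
    constructor
    · rintro (h | ⟨h1, h2⟩ | ⟨h1, h2⟩)
      · exact Or.inr h
      · exact Or.inl h1
      · exact Or.inr h1
    · rintro (h | h)
      · exact Or.inr (Or.inl ⟨h, reaches_refl b⟩)
      · exact Or.inl h
  set Vb := {x : G.V // x ≠ b} with hVb
  set π : G.V → Vb := fun x => if h : x = b then ⟨a, hne⟩ else ⟨x, h⟩ with hπ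
  have hval : ∀ z, (π z).1 = if z = b then a else z := by
    intro z
    by_cases h : z = b <;> simp [hπ, h]
  have hrep : ∀ x₀ y₀, R (π x₀).1 (π y₀).1 ↔ R x₀ y₀ := by
    intro x₀ y₀
    rw [hval, hval]
    by_cases hx : x₀ = b <;> by_cases hy : y₀ = b
    · rw [if_pos hx, if_pos hy, hx, hy, hRa, hRb]
      exact iff_of_true (Or.inl (reaches_refl a)) (Or.inr (reaches_refl b))
    · rw [if_pos hx, if_neg hy, hx, hRa, hRb]
    · rw [if_neg hx, if_pos hy, hy, hRa', hRb']
    · rw [if_neg hx, if_neg hy]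
  have hlt : ∀ e : G.E, R (π (G.src e)).1 (π (G.tgt e)).1 ∧
      ¬ R (π (G.tgt e)).1 (π (G.src e)).1 := by
    intro e
    constructor
    · exact (hrep _ _).2 (Or.inl (reaches_of_edge e))
    · intro hcon
      have h' := (hrep _ _).1 hcon
      rcases h' with h | ⟨h1, h2⟩ | ⟨h1, h2⟩
      · exact not_reaches_tgt_src e h
      · exact hba (reaches_trans (reaches_trans h2 (reaches_of_edge e)) h1)
      · exact hab (reaches_trans (reaches_trans h2 (reaches_of_edge e)) h1)
  let H : CausalNet :=
    { V := Vb
      E := G.E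
      src := fun e => π (G.src e)
      tgt := fun e => π (G.tgt e)
      fintypeV := Fintype.ofFinite _
      fintypeE := G.fintypeE
      acyclic := @noCycleData_of_lt Vb G.E
        { le := fun u v => R u.1 v.1
          lt := fun u v => R u.1 v.1 ∧ ¬ R v.1 u.1
          le_refl := fun u => Rrefl u.1
          le_trans := fun u v w h1 h2 => Rtrans u.1 v.1 w.1 h1 h2
          lt_iff_le_not_ge := fun _ _ => Iff.rfl } _ _ hlt }
  letI : Quiver H.V := CausalNet.quiver H
  letI : Category (Paths H.V) := Paths.categoryPaths H.V
  let Q : @Prefunctor G.V (CausalNet.quiver G) H.V (CausalNet.quiver H) :=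
    { obj := π
      map := fun {x y} u => ⟨u.1, congrArg π u.2.1, congrArg π u.2.2⟩ }
  let φ : G ⟶ H := Paths.lift (Q ⋙q (@Paths.of H.V (CausalNet.quiver H)))
  have hEdge : ∀ e : G.E, edgePath φ e =
      @Quiver.Hom.toPath H.V (CausalNet.quiver H) _ _ (Q.map (edgeHom G e)) :=
    fun e => Paths.lift_toPath _ _
  have hvmap : ∀ x, vmap φ x = π x := fun x => rfl
  refine ⟨H, φ, ⟨⟨⟨?_, ?_⟩, ?_⟩, ?_⟩, ?_⟩
  · intro v
    refine ⟨v.1, ?_⟩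
    rw [hvmap]
    exact Subtype.ext ((hval v.1).trans (if_neg v.2))
  · intro h
    refine ⟨h, ?_⟩
    rw [MapsToEdge, hEdge]
    exact pathEdges_toPath _
  · intro e hcon
    rw [IsSubdivisionEdge, hEdge] at hcon
    simp [Quiver.Hom.toPath, Quiver.Path.length, Quiver.Path.length_nil] at hcon
    exact Nat.not_succ_le_zero 0 hcon
  · intro e hcon
    rw [IsContractionEdge, hEdge] at hcon
    simp [Quiver.Hom.toPath, Quiver.Path.length] at hcon
  · rw [hvmap, hvmap]
    exact Subtype.ext (((hval a).trans (if_neg hne)).trans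
      (((hval b).trans (if_pos rfl)).symm))

end Merge
section Total

theorem hamiltonian_of_total (G : CausalNet) (h2 : Nonempty G.V)
    (htot : ∀ x y : G.V, Reaches G x y ∨ Reaches G y x) : HasHamiltonianPath G := by
  classical
  let lin : LinearOrder G.V :=
    { le := Reaches G
      lt := fun x y => Reaches G x y ∧ ¬ Reaches G y x
      le_refl := reaches_refl
      le_trans := fun _ _ _ => reaches_trans
      le_antisymm := fun _ _ => reaches_antisymm
      le_total := htot
      lt_iff_le_not_ge := fun _ _ => Iff.rfl
      toDecidableLE := Classical.decRel _ }
  set n := Fintype.card G.V with hn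
  have hn0 : 0 < n := Fintype.card_pos_iff.2 h2
  let σ : Fin n ≃o G.V := @monoEquivOfFin G.V G.fintypeV lin n hn.symm
  have hmono : ∀ i j : Fin n, Reaches G (σ i) (σ j) ↔ i ≤ j := fun i j => σ.le_iff_le
  have hinjσ : ∀ i j : Fin n, σ i = σ j → i = j := fun i j h => σ.injective h
  have hsurjσ : ∀ v : G.V, ∃ k : Fin n, σ k = v := fun v =>
    ⟨σ.symm v, σ.apply_symm_apply v⟩
  have step : ∀ (i j : Fin n), (i : ℕ) + 1 = (j : ℕ) →
      Nonempty (@Quiver.Hom G.V (CausalNet.quiver G) (σ i) (σ j)) := by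
    intro i j hij
    have hne : σ i ≠ σ j := by
      intro h
      have := hinjσ i j h
      rw [Fin.ext_iff] at this
      omega
    have hr : Reaches G (σ i) (σ j) := (hmono i j).2 (by rw [Fin.le_def]; omega)
    obtain ⟨p⟩ := hr
    obtain ⟨w, p', ⟨f⟩⟩ := exists_last_arrow p hne
    have hw1 : Reaches G (σ i) w := ⟨p'⟩
    have hw2 : w ≠ σ j := by
      intro h
      refine not_reaches_tgt_src (Subtype.val f) ?_
      rw [show G.tgt (Subtype.val f) = σ j from f.2.2,
        show G.src (Subtype.val f) = w from f.2.1, h]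
      exact reaches_refl _
    have hw3 : Reaches G w (σ j) := ⟨f.toPath⟩
    obtain ⟨k, hk⟩ := hsurjσ w
    have hik : i ≤ k := (hmono i k).1 (by rw [hk]; exact hw1)
    have hkj : k ≤ j := (hmono k j).1 (by rw [hk]; exact hw3)
    have hkj' : k ≠ j := by
      intro h
      exact hw2 (by rw [← hk, h])
    have hki : k = i := by
      rw [Fin.le_def] at hik hkj
      have hkj'' : (k : ℕ) ≠ (j : ℕ) := fun hh => hkj' (Fin.ext hh)
      exact Fin.ext (by omega)
    have hw : w = σ i := by rw [← hk, hki]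
    exact ⟨hw ▸ f⟩
  let f : ℕ → G.V := fun m => if h : m < n then σ ⟨m, h⟩ else Classical.choice h2
  have claim : ∀ m, m < n → ∃ p : @Quiver.Path G.V (CausalNet.quiver G) (f 0) (f m),
      pathVertices p = (List.range (m + 1)).map f := by
    intro m
    induction m with
    | zero => exact fun h => ⟨Quiver.Path.nil, by simp [pathVertices, List.range_succ]⟩
    | succ m ih =>
        intro h
        obtain ⟨p, hp⟩ := ih (by omega)
        obtain ⟨g⟩ := step ⟨m, by omega⟩ ⟨m + 1, h⟩ rfl
        have g' : @Quiver.Hom G.V (CausalNet.quiver G) (f m) (f (m + 1)) := by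
          have e1 : f m = σ ⟨m, by omega⟩ := dif_pos _
          have e2 : f (m + 1) = σ ⟨m + 1, h⟩ := dif_pos _
          rw [e1, e2]; exact g
        refine ⟨p.cons g', ?_⟩
        simp only [pathVertices]
        rw [hp]
        simp [List.range_succ]
  obtain ⟨p, hp⟩ := claim (n - 1) (by omega)
  have hn1 : n - 1 + 1 = n := by omega
  refine ⟨f 0, f (n - 1), p, ?_, ?_⟩
  · rw [hp]
    refine List.Nodup.map_on ?_ List.nodup_range
    intro x hx y hy hxy
    rw [List.mem_range, hn1] at hx hy
    have ex : f x = σ ⟨x, hx⟩ := dif_pos hx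
    have ey : f y = σ ⟨y, hy⟩ := dif_pos hy
    rw [ex, ey] at hxy
    have := hinjσ _ _ hxy
    rw [Fin.ext_iff] at this
    exact this
  · intro v
    rw [hp]
    obtain ⟨k, hk⟩ := hsurjσ v
    refine List.mem_map.2 ⟨k.1, List.mem_range.2 (by omega), ?_⟩
    rw [show f k.1 = σ ⟨k.1, k.isLt⟩ from dif_pos k.isLt]
    exact hk

end Total
theorem harmonic_iff_hamiltonian (G : CausalNet) (h1 : IsSimpleNet G)
    (h2 : Nonempty G.V) : Harmonic G ↔ HasHamiltonianPath G := by
  constructor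
  · intro hharm
    apply hamiltonian_of_total G h2
    intro x y
    by_contra hcon
    push_neg at hcon
    obtain ⟨hxy, hyx⟩ := hcon
    have hne : x ≠ y := fun h => hxy (h ▸ reaches_refl x)
    obtain ⟨H, φ, hfus, heq⟩ := merge_fusion G hne hxy hyx
    exact hne (vmap_injective_of_isIso φ (hharm H φ hfus) heq)
  · intro hham H φ hfus
    obtain ⟨u, w, p, hnodup, hall⟩ := hham
    have hinj : Function.Injective (vmap φ) := by
      have key : ∀ x y : G.V, vmap φ x = vmap φ y → Reaches G x y → x = y := by
        rintro x y hv ⟨q⟩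
        have hl : (pmap φ q).length = q.length :=
          pmap_length (fusion_edge_length hfus) q
        have hz : (pmap φ q).length = 0 := cycle_length_zero hv (pmap φ q)
        exact q.eq_of_length_zero (by omega)
      intro x y hxy
      rcases mem_comparable p (hall x) (hall y) with h | h
      · exact key x y hxy h
      · exact (key y x hxy.symm h).symm
    exact fusion_isIso h1 hfus hinj

end CausalNets
end

section
/- For every causal-net G and every n, the assignment sending a causal-coloring λ : G → S onto a sorting-net S of order n to the vertex function v ↦ λ(v) is a bijection between causal-colorings of G onto sorting-nets of order n and surjective linear-colorings L : V(G) → {1, …, n}. -/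
open CategoryTheory

namespace CausalNets

variable {G H K : CausalNet}

structure SortingNet (n : ℕ) where
  edges : Finset (Fin n × Fin n)
  lt : ∀ p ∈ edges, p.1 < p.2

noncomputable def SortingNet.toCausalNet {n : ℕ} (S : SortingNet n) : CausalNet where
  V := Fin n
  E := {p : Fin n × Fin n // p ∈ S.edges}
  src p := p.1.1
  tgt p := p.1.2
  fintypeV := inferInstance
  fintypeE := Fintype.ofFinite _
  acyclic := noCycleData_of_lt _ _ (fun e => S.lt e.1 e.2)

/- ### Auxiliary lemmas -/

theorem aux_length_one_exists {V : Type} [Quiver V] {a b : V} (p : Quiver.Path a b)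
    (hp : p.length = 1) : ∃ f : a ⟶ b, p = f.toPath := by
  match p with
  | Quiver.Path.nil => simp [Quiver.Path.length] at hp
  | Quiver.Path.cons (Quiver.Path.nil) f => exact ⟨f, rfl⟩
  | Quiver.Path.cons (Quiver.Path.cons r g) f =>
      simp [Quiver.Path.length] at hp

theorem aux_pathEdges_toPath {a b : G.V} (f : a ⟶ b) :
    pathEdges f.toPath = [homEdge f] := by
  simp [pathEdges, Quiver.Hom.toPath]

theorem aux_fusion_length (φ : G ⟶ H) (hφ : IsFusion φ) (e : G.E) :
    (edgePath φ e).length = 1 := by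
  have h1 := hφ.1.2 e
  have h2 := hφ.2 e
  unfold IsSubdivisionEdge at h1
  unfold IsContractionEdge at h2
  omega

theorem aux_fusion_edge (φ : G ⟶ H) (hφ : IsFusion φ) (e : G.E) :
    ∃ h : H.E, H.src h = vmap φ (G.src e) ∧ H.tgt h = vmap φ (G.tgt e) ∧
      MapsToEdge φ e h := by
  obtain ⟨f, hf⟩ := aux_length_one_exists _ (aux_fusion_length φ hφ e)
  refine ⟨f.1, f.2.1, f.2.2, ?_⟩
  unfold MapsToEdge
  rw [hf, aux_pathEdges_toPath]
  rfl

theorem aux_mapsToEdge_src_tgt (φ : G ⟶ H) (hφ : IsFusion φ) (e : G.E) (h : H.E)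
    (hm : MapsToEdge φ e h) :
    H.src h = vmap φ (G.src e) ∧ H.tgt h = vmap φ (G.tgt e) := by
  obtain ⟨f, hf⟩ := aux_length_one_exists _ (aux_fusion_length φ hφ e)
  unfold MapsToEdge at hm
  rw [hf, aux_pathEdges_toPath] at hm
  have hh : homEdge f = h := by injection hm
  subst hh
  exact ⟨f.2.1, f.2.2⟩

theorem aux_sortingNet_simple {n : ℕ} (S : SortingNet n) :
    IsSimpleNet S.toCausalNet := by
  intro e₁ e₂ h1 h2
  exact Subtype.ext (Prod.ext h1 h2)

theorem aux_sorting_arrow_eq {n : ℕ} {S : SortingNet n} {a b : S.toCausalNet.V}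
    (f g : a ⟶ b) : f = g := by
  apply Subtype.ext
  apply Subtype.ext
  exact Prod.ext (f.2.1.trans g.2.1.symm) (f.2.2.trans g.2.2.symm)

theorem aux_sorting_path_one_unique {n : ℕ} {S : SortingNet n} {a b : S.toCausalNet.V}
    (p q : Quiver.Path a b) (hp : p.length = 1) (hq : q.length = 1) : p = q := by
  obtain ⟨f, hf⟩ := aux_length_one_exists p hp
  obtain ⟨g, hg⟩ := aux_length_one_exists q hq
  rw [hf, hg, aux_sorting_arrow_eq f g]

theorem aux_eqToHom_path_length {V : Type} [Quiver V] {a b : Paths V} (h : a = b) :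
    (Quiver.Path.length (eqToHom h : a ⟶ b)) = 0 := by
  subst h
  rfl

theorem aux_comp_path_length {V : Type} [Quiver V] {a b c : Paths V}
    (p : a ⟶ b) (q : b ⟶ c) :
    (Quiver.Path.length (p ≫ q)) = Quiver.Path.length p + Quiver.Path.length q := by
  exact Quiver.Path.length_comp p q

/-- The sorting-net associated to a linear-coloring. -/
noncomputable def mkSortingNet (G : CausalNet) {n : ℕ} (L : G.V → Fin n)
    (hL : ∀ e : G.E, L (G.src e) < L (G.tgt e)) : SortingNet n where
  edges := Finset.image (fun e => (L (G.src e), L (G.tgt e))) Finset.univ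
  lt := by
    intro p hp
    simp only [Finset.mem_image, Finset.mem_univ, true_and] at hp
    obtain ⟨e, he⟩ := hp
    rw [← he]
    exact hL e

/-- The causal-coloring associated to a linear-coloring. -/
noncomputable def mkColoring (G : CausalNet) {n : ℕ} (L : G.V → Fin n)
    (hL : ∀ e : G.E, L (G.src e) < L (G.tgt e)) :
    G ⟶ (mkSortingNet G L hL).toCausalNet :=
  Paths.lift
    { obj := fun v => L v
      map := fun {a b} f =>
        Quiver.Hom.toPath
          (⟨⟨(L a, L b), by
              simp only [mkSortingNet, Finset.mem_image, Finset.mem_univ, true_and]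
              exact ⟨f.1, by rw [f.2.1, f.2.2]⟩⟩, rfl, rfl⟩ :
            @Quiver.Hom (mkSortingNet G L hL).toCausalNet.V
              (CausalNet.quiver _) (L a) (L b)) }

theorem aux_mkColoring_vmap (G : CausalNet) {n : ℕ} (L : G.V → Fin n)
    (hL : ∀ e : G.E, L (G.src e) < L (G.tgt e)) :
    (vmap (mkColoring G L hL) : G.V → Fin n) = L := rfl

theorem aux_mkColoring_edgePath (G : CausalNet) {n : ℕ} (L : G.V → Fin n)
    (hL : ∀ e : G.E, L (G.src e) < L (G.tgt e)) (e : G.E) :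
    edgePath (mkColoring G L hL) e =
      Quiver.Hom.toPath
        (⟨⟨(L (G.src e), L (G.tgt e)), by
            simp only [mkSortingNet, Finset.mem_image, Finset.mem_univ, true_and]
            exact ⟨e, rfl⟩⟩, rfl, rfl⟩ :
          @Quiver.Hom (mkSortingNet G L hL).toCausalNet.V
            (CausalNet.quiver _) (L (G.src e)) (L (G.tgt e))) := by
  show (Paths.lift _).map (Quiver.Hom.toPath (edgeHom G e)) = _
  rw [Paths.lift_toPath]
  rfl

theorem aux_mkColoring_fusion (G : CausalNet) {n : ℕ} (L : G.V → Fin n)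
    (hL : ∀ e : G.E, L (G.src e) < L (G.tgt e)) (hsurj : Function.Surjective L) :
    IsFusion (mkColoring G L hL) := by
  have hlen : ∀ e : G.E, (edgePath (mkColoring G L hL) e).length = 1 := by
    intro e
    rw [aux_mkColoring_edgePath]
    rfl
  refine ⟨⟨⟨?_, ?_⟩, ?_⟩, ?_⟩
  · intro v
    obtain ⟨w, hw⟩ := hsurj v
    exact ⟨w, hw⟩
  · intro h
    have hmem := h.2
    simp only [mkSortingNet, Finset.mem_image, Finset.mem_univ, true_and] at hmem
    obtain ⟨e, he⟩ := hmem
    refine ⟨e, ?_⟩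
    unfold MapsToEdge
    rw [aux_mkColoring_edgePath]
    refine (aux_pathEdges_toPath _).trans ?_
    congr 1
    apply Subtype.ext
    exact he
  · intro e hsub
    unfold IsSubdivisionEdge at hsub
    rw [hlen e] at hsub
    omega
  · intro e hcon
    unfold IsContractionEdge at hcon
    rw [hlen e] at hcon
    omega

theorem aux_sortingNet_ext {n : ℕ} {S₁ S₂ : SortingNet n} (h : S₁.edges = S₂.edges) :
    S₁ = S₂ := by
  cases S₁; cases S₂
  cases h
  rfl

theorem aux_fusion_edges_eq {n : ℕ} {S : SortingNet n} (φ : G ⟶ S.toCausalNet)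
    (hφ : IsFusion φ) :
    S.edges = Finset.image
      ((fun e => (vmap φ (G.src e), vmap φ (G.tgt e))) : G.E → Fin n × Fin n)
      (Finset.univ : Finset G.E) := by
  apply Finset.ext
  intro p
  simp only [Finset.mem_image, Finset.mem_univ, true_and]
  constructor
  · intro hp
    obtain ⟨e, he⟩ := hφ.1.1.2 ⟨p, hp⟩
    obtain ⟨h1, h2⟩ := aux_mapsToEdge_src_tgt φ hφ e ⟨p, hp⟩ he
    exact ⟨e, Prod.ext h1.symm h2.symm⟩
  · rintro ⟨e, rfl⟩
    obtain ⟨h, h1, h2, _⟩ := aux_fusion_edge φ hφ e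
    have : (vmap φ (G.src e), vmap φ (G.tgt e)) = h.1 := Prod.ext h1.symm h2.symm
    exact (congrArg (· ∈ S.edges) this).mpr h.2

theorem coloring_bij_linearColoring (G : CausalNet) (n : ℕ) :
    Set.BijOn
      (fun p : Σ S : SortingNet n, (G ⟶ S.toCausalNet) => (vmap p.2 : G.V → Fin n))
      {p | IsFusion p.2 ∧ IsSimpleNet p.1.toCausalNet}
      {L : G.V → Fin n | Function.Surjective L ∧
        ∀ e : G.E, L (G.src e) < L (G.tgt e)} := by
  refine ⟨?_, ?_, ?_⟩
  · -- MapsTo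
    rintro ⟨S, φ⟩ ⟨hφ, -⟩
    refine ⟨hφ.1.1.1, fun e => ?_⟩
    obtain ⟨h, h1, h2, -⟩ := aux_fusion_edge φ hφ e
    have hlt := S.lt h.1 h.2
    show @LT.lt (Fin n) _ (vmap φ (G.src e)) (vmap φ (G.tgt e))
    rw [← h1, ← h2]
    exact hlt
  · -- InjOn
    rintro ⟨S₁, φ₁⟩ ⟨h₁, -⟩ ⟨S₂, φ₂⟩ ⟨h₂, -⟩ heq'
    have heq : (vmap φ₁ : G.V → Fin n) = vmap φ₂ := heq'
    have hS : S₁ = S₂ := by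
      apply aux_sortingNet_ext
      rw [aux_fusion_edges_eq φ₁ h₁, aux_fusion_edges_eq φ₂ h₂, heq]
    subst hS
    have hφ : φ₁ = φ₂ := by
      apply Paths.ext_functor heq
      rintro a b ⟨e, rfl, rfl⟩
      refine aux_sorting_path_one_unique _ _ ?_ ?_
      · exact aux_fusion_length φ₁ h₁ e
      · rw [aux_comp_path_length, aux_comp_path_length, aux_eqToHom_path_length,
          aux_eqToHom_path_length, Nat.zero_add, Nat.add_zero]
        exact aux_fusion_length φ₂ h₂ e
    rw [hφ]
  · -- SurjOn
    rintro L ⟨hsurj, hL⟩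
    refine ⟨⟨mkSortingNet G L hL, mkColoring G L hL⟩,
      ⟨aux_mkColoring_fusion G L hL hsurj, aux_sortingNet_simple _⟩, ?_⟩
    exact aux_mkColoring_vmap G L hL

end CausalNets
end
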